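/- arXiv:1503.04578 — 4 statements merged into one kernel-verified Lean document; each statement's English description precedes it below -/
import Mathlib

section
/- Let v : ℝ → ℂ be a bounded measurable function. Then the double-layer potential W(x₁,x₂) = (1/(2π)) ∫_ℝ x₂ v(τ) / ((x₁−τ)² + x₂²) dτ is harmonic on ℝ² ∖ (ℝ × {0}): it is twice continuously differentiable there and ∂²W/∂x₁² + ∂²W/∂x₂² = 0 at every point (x₁,x₂) with x₂ ≠ 0. -/
open MeasureTheory Complex

lemma sub_ofReal_ne (τ : ℝ) {w : ℂ} (hw : w.im ≠ 0) : (τ:ℂ) - w ≠ 0 := by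
  intro h
  apply hw
  have := congrArg Complex.im h
  simpa using this.symm

lemma sq_add_one_ne (τ : ℝ) : ((τ:ℂ)^2 + 1) ≠ 0 := by
  have : ((τ:ℂ)^2 + 1) = ((τ^2 + 1 : ℝ) : ℂ) := by push_cast; ring
  rw [this, Complex.ofReal_ne_zero]
  positivity

lemma ker_id (a b τ : ℝ) (hb : b ≠ 0) (cv : ℂ) :
    (1/(2*Real.pi):ℂ) * (((b / ((a - τ)^2 + b^2) : ℝ) : ℂ) * cv)
      = (1/(4*Real.pi*I)) *
        (cv * (((τ:ℂ) - ((a:ℂ) + (b:ℂ)*I))⁻¹ - (τ:ℂ)/((τ:ℂ)^2+1))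
          - cv * (((τ:ℂ) - ((a:ℂ) - (b:ℂ)*I))⁻¹ - (τ:ℂ)/((τ:ℂ)^2+1))) := by
  have h1 : (τ:ℂ) - ((a:ℂ) + (b:ℂ)*I) ≠ 0 := by
    apply sub_ofReal_ne; simp [hb]
  have h2 : (τ:ℂ) - ((a:ℂ) - (b:ℂ)*I) ≠ 0 := by
    apply sub_ofReal_ne; simp [hb]
  have hq : ((a - τ)^2 + b^2 : ℝ) ≠ 0 := by positivity
  have hπ : (Real.pi : ℂ) ≠ 0 := by
    simpa using Real.pi_ne_zero
  have hI := Complex.I_ne_zero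
  have hq' : (((a:ℂ) - τ)^2 + (b:ℂ)^2) ≠ 0 := by
    rw [show (((a:ℂ) - τ)^2 + (b:ℂ)^2) = (((a - τ)^2 + b^2 : ℝ) : ℂ) by push_cast; ring,
      Complex.ofReal_ne_zero]
    exact hq
  push_cast
  field_simp
  ring_nf
  rw [show (Complex.I)^3 = -Complex.I by rw [pow_succ, Complex.I_sq]; ring]
  ring

/-- numerator bound: `‖1 + τ w‖ ≤ C * ‖τ - w‖`. -/
lemma num_bound (w : ℂ) (hw : w.im ≠ 0) (τ : ℝ) :
    ‖1 + (τ:ℂ) * w‖ ≤ ((1 + 2*‖w‖ + 2*‖w‖^2) * (1 + |w.im|⁻¹)) * ‖(τ:ℂ) - w‖ := by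
  set r := ‖w‖ with hr
  set b := |w.im| with hbdef
  have hb : 0 < b := abs_pos.mpr hw
  have hbr : b ≤ r := Complex.abs_im_le_norm w
  have hr0 : 0 ≤ r := norm_nonneg w
  have hnum : ‖1 + (τ:ℂ) * w‖ ≤ 1 + |τ| * r := by
    calc ‖1 + (τ:ℂ) * w‖ ≤ ‖(1:ℂ)‖ + ‖(τ:ℂ) * w‖ := norm_add_le _ _
    _ = 1 + |τ| * r := by simp [Complex.norm_real, hr]
  have hden1 : b ≤ ‖(τ:ℂ) - w‖ := by
    calc b = |((τ:ℂ) - w).im| := by simp [hbdef]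
    _ ≤ ‖(τ:ℂ) - w‖ := Complex.abs_im_le_norm _
  have hden2 : |τ| - r ≤ ‖(τ:ℂ) - w‖ := by
    calc |τ| - r = ‖(τ:ℂ)‖ - ‖w‖ := by simp [Complex.norm_real]; rw [hr]
    _ ≤ ‖(τ:ℂ) - w‖ := norm_sub_norm_le _ _
  have hbinv : b * b⁻¹ = 1 := mul_inv_cancel₀ hb.ne'
  rcases le_or_gt (|τ|) (2*r + 2) with hτ | hτ
  · nlinarith [norm_nonneg ((τ:ℂ) - w), abs_nonneg τ, sq_nonneg r,
      mul_le_mul_of_nonneg_left hden1 (le_of_lt (by positivity : (0:ℝ) < (1 + 2*r + 2*r^2) * b⁻¹))]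
  · nlinarith [abs_nonneg τ, inv_nonneg.mpr hb.le,
      mul_le_mul_of_nonneg_left hden2 (by positivity : (0:ℝ) ≤ 1 + 2*r),
      mul_nonneg (mul_nonneg (by positivity : (0:ℝ) ≤ 1 + 2*r + 2*r^2) (inv_nonneg.mpr hb.le)) (norm_nonneg ((τ:ℂ) - w))]

noncomputable def Kker (v : ℝ → ℂ) (w : ℂ) (τ : ℝ) : ℂ :=
  v τ * (((τ:ℂ) - w)⁻¹ - (τ:ℂ)/((τ:ℂ)^2+1))

lemma Kker_bound (v : ℝ → ℂ) (M : ℝ) (hM : ∀ t, ‖v t‖ ≤ M) (w : ℂ) (hw : w.im ≠ 0) (τ : ℝ) :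
    ‖Kker v w τ‖ ≤ (M * ((1 + 2*‖w‖ + 2*‖w‖^2) * (1 + |w.im|⁻¹))) * (1 + τ^2)⁻¹ := by
  have hM0 : 0 ≤ M := le_trans (norm_nonneg _) (hM 0)
  have h1 : (τ:ℂ) - w ≠ 0 := sub_ofReal_ne τ hw
  have h2 := sq_add_one_ne τ
  have hsingle : ((τ:ℂ) - w)⁻¹ - (τ:ℂ)/((τ:ℂ)^2+1)
      = (1 + (τ:ℂ)*w) / (((τ:ℂ) - w) * ((τ:ℂ)^2+1)) := by
    field_simp
    ring
  have hnorm_q : ‖(τ:ℂ)^2 + 1‖ = 1 + τ^2 := by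
    rw [show ((τ:ℂ)^2 + 1) = ((τ^2 + 1 : ℝ) : ℂ) by push_cast; ring, Complex.norm_real,
      Real.norm_eq_abs, abs_of_pos (by positivity : (0:ℝ) < τ^2+1)]
    ring
  have hC : (0:ℝ) ≤ (1 + 2*‖w‖ + 2*‖w‖^2) * (1 + |w.im|⁻¹) := by positivity
  have hden_pos : 0 < ‖(τ:ℂ) - w‖ := norm_pos_iff.mpr h1
  rw [Kker, hsingle, norm_mul, norm_div, norm_mul, hnorm_q]
  have key := num_bound w hw τ
  calc ‖v τ‖ * (‖1 + (τ:ℂ)*w‖ / (‖(τ:ℂ) - w‖ * (1 + τ^2)))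
      ≤ M * ((((1 + 2*‖w‖ + 2*‖w‖^2) * (1 + |w.im|⁻¹)) * ‖(τ:ℂ) - w‖) / (‖(τ:ℂ) - w‖ * (1 + τ^2))) := by
        exact mul_le_mul (hM τ) ((div_le_div_iff_of_pos_right (by positivity)).mpr key) (by positivity) hM0
      _ = (M * ((1 + 2*‖w‖ + 2*‖w‖^2) * (1 + |w.im|⁻¹))) * (1 + τ^2)⁻¹ := by
        rw [mul_comm ((1 + 2*‖w‖ + 2*‖w‖^2) * (1 + |w.im|⁻¹)) ‖(τ:ℂ) - w‖,
          mul_div_mul_left _ _ hden_pos.ne', div_eq_mul_inv]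
        ring

lemma Kker_cont (v : ℝ → ℂ) {w : ℂ} (hw : w.im ≠ 0) :
    Continuous fun τ : ℝ => (((τ:ℂ) - w)⁻¹ - (τ:ℂ)/((τ:ℂ)^2+1)) := by
  apply Continuous.sub
  · exact (Complex.continuous_ofReal.sub continuous_const).inv₀ fun τ => sub_ofReal_ne τ hw
  · exact Complex.continuous_ofReal.div
      (((Complex.continuous_ofReal.pow 2).add continuous_const)) fun τ => sq_add_one_ne τ

lemma Kker_meas (v : ℝ → ℂ) (hv : Measurable v) {w : ℂ} (hw : w.im ≠ 0) :
    AEStronglyMeasurable (Kker v w) volume :=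
  (hv.aestronglyMeasurable).mul (Kker_cont v hw).aestronglyMeasurable

lemma Kker_integrable (v : ℝ → ℂ) (hv : Measurable v) (M : ℝ) (hM : ∀ t, ‖v t‖ ≤ M)
    {w : ℂ} (hw : w.im ≠ 0) : Integrable (Kker v w) := by
  refine ((integrable_inv_one_add_sq.const_mul
      (M * ((1 + 2*‖w‖ + 2*‖w‖^2) * (1 + |w.im|⁻¹)))).mono' (Kker_meas v hv hw) ?_)
  exact Filter.Eventually.of_forall fun τ => by
    simpa using Kker_bound v M hM w hw τ

lemma ball_im_ge {w₀ w : ℂ} (hw₀ : w₀.im ≠ 0) (h : w ∈ Metric.ball w₀ (|w₀.im|/2)) :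
    |w₀.im|/2 ≤ |w.im| := by
  have h1 : |w.im - w₀.im| ≤ dist w w₀ := by
    rw [Complex.dist_eq]
    simpa using Complex.abs_im_le_norm (w - w₀)
  have h2 : dist w w₀ < |w₀.im|/2 := Metric.mem_ball.mp h
  have h3 : |w₀.im| - |w.im| ≤ |w.im - w₀.im| := by
    rw [abs_sub_comm]
    exact abs_sub_abs_le_abs_sub _ _
  linarith

lemma ball_im_ne {w₀ w : ℂ} (hw₀ : w₀.im ≠ 0) (h : w ∈ Metric.ball w₀ (|w₀.im|/2)) :
    w.im ≠ 0 := by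
  have := ball_im_ge hw₀ h
  have h0 : 0 < |w₀.im| := abs_pos.mpr hw₀
  intro h'
  rw [h'] at this
  simp at this
  linarith

lemma deriv_bound (v : ℝ → ℂ) (M : ℝ) (hM : ∀ t, ‖v t‖ ≤ M) (w₀ : ℂ) (hw₀ : w₀.im ≠ 0)
    {w : ℂ} (hw : w ∈ Metric.ball w₀ (|w₀.im|/2)) (τ : ℝ) :
    ‖v τ * (((τ:ℂ) - w)^2)⁻¹‖ ≤
      (M * (((2*(‖w₀‖ + |w₀.im|/2) + 2)^2 + 1) * ((|w₀.im|/2)^2)⁻¹ + 5)) * (1 + τ^2)⁻¹ := by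
  have hM0 : 0 ≤ M := le_trans (norm_nonneg _) (hM 0)
  set δ := |w₀.im|/2 with hδdef
  have hδ : 0 < δ := by
    have : 0 < |w₀.im| := abs_pos.mpr hw₀
    positivity
  set r' := ‖w₀‖ + δ with hr'def
  have hr' : 0 < r' := by positivity
  have hwr : ‖w‖ ≤ r' := by
    have := Metric.mem_ball.mp hw
    have h4 : ‖w‖ - ‖w₀‖ ≤ ‖w - w₀‖ := norm_sub_norm_le _ _
    rw [dist_eq_norm] at this
    linarith
  have hA1 : δ ≤ ‖(τ:ℂ) - w‖ := by
    calc δ ≤ |w.im| := ball_im_ge hw₀ hw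
    _ = |((τ:ℂ) - w).im| := by simp
    _ ≤ ‖(τ:ℂ) - w‖ := Complex.abs_im_le_norm _
  have hA2 : |τ| - r' ≤ ‖(τ:ℂ) - w‖ := by
    have := norm_sub_norm_le (τ:ℂ) w
    rw [Complex.norm_real, Real.norm_eq_abs] at this
    linarith
  set A := ‖(τ:ℂ) - w‖ with hA
  have hA0 : 0 < A := lt_of_lt_of_le hδ hA1
  set C₂ : ℝ := ((2*r' + 2)^2 + 1) * (δ^2)⁻¹ + 5 with hC₂
  clear_value δ r' A C₂
  have hC₂5 : 5 ≤ C₂ := by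
    rw [hC₂]
    have : 0 ≤ ((2*r' + 2)^2 + 1) * (δ^2)⁻¹ := by positivity
    linarith
  have hCδ : C₂ * δ^2 = ((2*r' + 2)^2 + 1) + 5 * δ^2 := by
    rw [hC₂]
    field_simp
  have hkey : 1 + τ^2 ≤ C₂ * A^2 := by
    rcases le_or_gt (|τ|) (2*r' + 2) with hτ | hτ
    · have hτ2 : τ^2 ≤ (2*r' + 2)^2 := by
        have := _root_.sq_abs τ
        nlinarith [abs_nonneg τ]
      have : C₂ * δ^2 ≤ C₂ * A^2 := by
        apply mul_le_mul_of_nonneg_left _ (by positivity)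
        nlinarith
      nlinarith
    · have h5 : |τ|/2 ≤ A := by
        have : r' ≤ |τ|/2 - 1 := by linarith
        linarith
      have hτ4 : 2 ≤ |τ| := by linarith
      have : 5 * A^2 ≤ C₂ * A^2 := by nlinarith
      nlinarith [_root_.sq_abs τ, sq_nonneg A]
  rw [norm_mul, norm_inv, norm_pow, ← hA]
  calc ‖v τ‖ * (A^2)⁻¹ ≤ M * (C₂ * (1 + τ^2)⁻¹) := by
        apply mul_le_mul (hM τ) _ (by positivity) hM0
        rw [inv_le_iff_one_le_mul₀ (by positivity)]
        have h1 := mul_le_mul_of_nonneg_right hkey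
          (inv_nonneg.mpr (le_of_lt (by positivity : (0:ℝ) < 1+τ^2)))
        rw [mul_inv_cancel₀ (by positivity : (1+τ^2:ℝ) ≠ 0)] at h1
        calc (1:ℝ) ≤ C₂ * A^2 * (1+τ^2)⁻¹ := h1
        _ = C₂ * (1+τ^2)⁻¹ * A^2 := by ring
      _ = (M * C₂) * (1 + τ^2)⁻¹ := by ring

lemma Kker_hasDerivAt (v : ℝ → ℂ) (τ : ℝ) {w : ℂ} (hw : w.im ≠ 0) :
    HasDerivAt (fun w => Kker v w τ) (v τ * (((τ:ℂ) - w)^2)⁻¹) w := by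
  have h1 : HasDerivAt (fun w : ℂ => (τ:ℂ) - w) (-1) w := by
    simpa using (hasDerivAt_id w).const_sub (τ:ℂ)
  have h2 := h1.inv (sub_ofReal_ne τ hw)
  have h3 := (h2.sub_const ((τ:ℂ)/((τ:ℂ)^2+1))).const_mul (v τ)
  rw [show v τ * (((τ:ℂ) - w)^2)⁻¹ = v τ * (- -1 / ((τ:ℂ) - w)^2) by rw [neg_neg, one_div]]
  exact h3

lemma Fint_diffOn (v : ℝ → ℂ) (hv : Measurable v) (M : ℝ) (hM : ∀ t, ‖v t‖ ≤ M) :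
    DifferentiableOn ℂ (fun w => ∫ τ : ℝ, Kker v w τ) {w : ℂ | w.im ≠ 0} := by
  intro w₀ hw₀
  have hw₀' : w₀.im ≠ 0 := hw₀
  have hδ : 0 < |w₀.im|/2 := by
    have : 0 < |w₀.im| := abs_pos.mpr hw₀'
    positivity
  have hmeas : ∀ᶠ w in nhds w₀, AEStronglyMeasurable (fun τ => Kker v w τ) volume := by
    filter_upwards [Metric.ball_mem_nhds w₀ hδ] with w hw
    exact Kker_meas v hv (ball_im_ne hw₀' hw)
  have hint : Integrable (fun τ => Kker v w₀ τ) volume := Kker_integrable v hv M hM hw₀'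
  have hmeas' : AEStronglyMeasurable (fun τ => v τ * (((τ:ℂ) - w₀)^2)⁻¹) volume := by
    refine hv.aestronglyMeasurable.mul ?_
    refine (Continuous.aestronglyMeasurable ?_)
    exact ((Complex.continuous_ofReal.sub continuous_const).pow 2).inv₀
      fun τ => pow_ne_zero 2 (sub_ofReal_ne τ hw₀')
  have hbound : ∀ᵐ τ : ℝ, ∀ w ∈ Metric.ball w₀ (|w₀.im|/2),
      ‖v τ * (((τ:ℂ) - w)^2)⁻¹‖ ≤
        (M * (((2*(‖w₀‖ + |w₀.im|/2) + 2)^2 + 1) * ((|w₀.im|/2)^2)⁻¹ + 5)) * (1 + τ^2)⁻¹ :=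
    Filter.Eventually.of_forall fun τ w hw => deriv_bound v M hM w₀ hw₀' hw τ
  have hbint : Integrable (fun τ : ℝ =>
      (M * (((2*(‖w₀‖ + |w₀.im|/2) + 2)^2 + 1) * ((|w₀.im|/2)^2)⁻¹ + 5)) * (1 + τ^2)⁻¹)
      volume := integrable_inv_one_add_sq.const_mul _
  have hdiff : ∀ᵐ τ : ℝ, ∀ w ∈ Metric.ball w₀ (|w₀.im|/2),
      HasDerivAt (fun w => Kker v w τ) (v τ * (((τ:ℂ) - w)^2)⁻¹) w :=
    Filter.Eventually.of_forall fun τ w hw => Kker_hasDerivAt v τ (ball_im_ne hw₀' hw)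
  obtain ⟨-, hder⟩ := hasDerivAt_integral_of_dominated_loc_of_deriv_le (Metric.ball_mem_nhds w₀ hδ) hmeas hint hmeas'
    hbound hbint hdiff
  exact hder.differentiableAt.differentiableWithinAt

noncomputable def Emap : (ℝ × ℝ) →L[ℝ] ℂ := (Complex.equivRealProdCLM.symm : (ℝ × ℝ) ≃L[ℝ] ℂ)

noncomputable def Cmap : (ℝ × ℝ) →L[ℝ] ℂ :=
  ((Complex.conjCLE : ℂ ≃L[ℝ] ℂ) : ℂ →L[ℝ] ℂ).comp Emap

@[simp] lemma Emap_apply (p : ℝ × ℝ) : Emap p = (p.1 : ℂ) + (p.2 : ℂ) * Complex.I :=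
  Complex.equivRealProdCLM_symm_apply p

@[simp] lemma Cmap_apply (p : ℝ × ℝ) : Cmap p = (p.1 : ℂ) - (p.2 : ℂ) * Complex.I := by
  simp [Cmap, Emap_apply, Complex.conjCLE_apply, map_add, map_mul, Complex.conj_ofReal,
    Complex.conj_I]
  ring

@[simp] lemma Emap_im (p : ℝ × ℝ) : (Emap p).im = p.2 := by simp
@[simp] lemma Cmap_im (p : ℝ × ℝ) : (Cmap p).im = -p.2 := by simp

noncomputable def Fpot (v : ℝ → ℂ) (w : ℂ) : ℂ :=
  (1/(4*Real.pi*Complex.I)) * ∫ τ : ℝ, Kker v w τ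

lemma Fpot_diffOn (v : ℝ → ℂ) (hv : Measurable v) (M : ℝ) (hM : ∀ t, ‖v t‖ ≤ M) :
    DifferentiableOn ℂ (Fpot v) {w : ℂ | w.im ≠ 0} :=
  (Fint_diffOn v hv M hM).const_mul _

lemma isOpen_offReal : IsOpen {w : ℂ | w.im ≠ 0} :=
  IsOpen.preimage Complex.continuous_im isOpen_compl_singleton

lemma isOpen_S : IsOpen {x : ℝ × ℝ | x.2 ≠ 0} :=
  IsOpen.preimage continuous_snd isOpen_compl_singleton

lemma W_eq (v : ℝ → ℂ) (hv : Measurable v) (M : ℝ) (hM : ∀ t : ℝ, ‖v t‖ ≤ M)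
    (W : ℝ × ℝ → ℂ)
    (hW : ∀ x : ℝ × ℝ, W x = (1 / (2 * Real.pi) : ℂ) *
      ∫ τ : ℝ, ((x.2 / ((x.1 - τ) ^ 2 + x.2 ^ 2) : ℝ) : ℂ) * v τ) :
    W = fun x => Fpot v (Emap x) - Fpot v (Cmap x) := by
  funext x
  rcases eq_or_ne x.2 0 with hx | hx
  · have hE : Emap x = Cmap x := by simp [hx]
    rw [hW x, hE, sub_self]
    have h0 : ∀ τ : ℝ, ((x.2 / ((x.1 - τ) ^ 2 + x.2 ^ 2) : ℝ) : ℂ) * v τ = 0 := by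
      intro τ; rw [hx]; simp
    simp only [h0, integral_zero, mul_zero]
  · have hzE : (Emap x).im ≠ 0 := by simpa using hx
    have hzC : (Cmap x).im ≠ 0 := by simpa using hx
    have h₁ : Integrable (Kker v (Emap x)) := Kker_integrable v hv M hM hzE
    have h₂ : Integrable (Kker v (Cmap x)) := Kker_integrable v hv M hM hzC
    rw [hW x]
    calc (1 / (2 * Real.pi) : ℂ) * ∫ τ : ℝ, ((x.2 / ((x.1 - τ) ^ 2 + x.2 ^ 2) : ℝ) : ℂ) * v τ
        = ∫ τ : ℝ, (1 / (2 * Real.pi) : ℂ) * (((x.2 / ((x.1 - τ) ^ 2 + x.2 ^ 2) : ℝ) : ℂ) * v τ) :=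
          (integral_const_mul _ _).symm
      _ = ∫ τ : ℝ, (1/(4*Real.pi*Complex.I)) * (Kker v (Emap x) τ - Kker v (Cmap x) τ) := by
          refine integral_congr_ae (Filter.Eventually.of_forall fun τ => ?_)
          have := ker_id x.1 x.2 τ hx (v τ)
          simp only [Kker, Emap_apply, Cmap_apply]
          exact this
      _ = (1/(4*Real.pi*Complex.I)) * ∫ τ : ℝ, (Kker v (Emap x) τ - Kker v (Cmap x) τ) :=
          integral_const_mul _ _
      _ = Fpot v (Emap x) - Fpot v (Cmap x) := by
          rw [integral_sub h₁ h₂, Fpot, Fpot]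
          ring

lemma comp_hasFDerivAt {f : ℂ → ℂ} {a : ℂ} (L : (ℝ × ℝ) →L[ℝ] ℂ) {y : ℝ × ℝ}
    (hf : HasDerivAt f a (L y)) :
    HasFDerivAt (fun p => f (L p))
      ((((1 : ℂ →L[ℂ] ℂ).smulRight a).restrictScalars ℝ).comp L) y :=
  (hf.hasFDerivAt.restrictScalars ℝ).comp y L.hasFDerivAt

lemma comp_eval (a : ℂ) (L : (ℝ × ℝ) →L[ℝ] ℂ) (u : ℝ × ℝ) :
    ((((1 : ℂ →L[ℂ] ℂ).smulRight a).restrictScalars ℝ).comp L) u = L u * a := by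
  simp [ContinuousLinearMap.smulRight_apply, smul_eq_mul]

/-- The Laplacian of a complex-valued function on `ℝ × ℝ` at `x`: sum of the second partial
derivatives in the two coordinate directions. -/
noncomputable def lapPlaneC (W : ℝ × ℝ → ℂ) (x : ℝ × ℝ) : ℂ :=
  fderiv ℝ (fun y => fderiv ℝ W y ((1:ℝ), (0:ℝ))) x ((1:ℝ), (0:ℝ)) +
    fderiv ℝ (fun y => fderiv ℝ W y ((0:ℝ), (1:ℝ))) x ((0:ℝ), (1:ℝ))

/-- The double-layer potential of a bounded measurable density `v : ℝ → ℂ` is twice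
continuously differentiable and harmonic off the real axis. -/
theorem double_layer_potential_harmonic
    (v : ℝ → ℂ) (hv : Measurable v) (M : ℝ) (hM : ∀ t : ℝ, ‖v t‖ ≤ M)
    (W : ℝ × ℝ → ℂ)
    (hW : ∀ x : ℝ × ℝ, W x = (1 / (2 * Real.pi) : ℂ) *
      ∫ τ : ℝ, ((x.2 / ((x.1 - τ) ^ 2 + x.2 ^ 2) : ℝ) : ℂ) * v τ) :
    ContDiffOn ℝ 2 W {x : ℝ × ℝ | x.2 ≠ 0} ∧
      ∀ x : ℝ × ℝ, x.2 ≠ 0 → lapPlaneC W x = 0 := by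
  have hWf := W_eq v hv M hM W hW
  have hU : IsOpen {w : ℂ | w.im ≠ 0} := isOpen_offReal
  have hFd : DifferentiableOn ℂ (Fpot v) {w : ℂ | w.im ≠ 0} := Fpot_diffOn v hv M hM
  have hES : ∀ y : ℝ × ℝ, y.2 ≠ 0 → (Emap y) ∈ {w : ℂ | w.im ≠ 0} := fun y hy => by
    simpa using hy
  have hCS : ∀ y : ℝ × ℝ, y.2 ≠ 0 → (Cmap y) ∈ {w : ℂ | w.im ≠ 0} := fun y hy => by
    simpa using hy
  constructor
  · rw [hWf]
    have hF2 : ContDiffOn ℝ 2 (Fpot v) {w : ℂ | w.im ≠ 0} :=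
      (hFd.contDiffOn hU).restrict_scalars ℝ
    have hE2 : ContDiffOn ℝ 2 (fun x : ℝ × ℝ => Fpot v (Emap x)) {x : ℝ × ℝ | x.2 ≠ 0} :=
      hF2.comp (Emap.contDiff.contDiffOn) fun y hy => hES y hy
    have hC2 : ContDiffOn ℝ 2 (fun x : ℝ × ℝ => Fpot v (Cmap x)) {x : ℝ × ℝ | x.2 ≠ 0} :=
      hF2.comp (Cmap.contDiff.contDiffOn) fun y hy => hCS y hy
    exact hE2.sub hC2
  · intro x hx
    have han : AnalyticOnNhd ℂ (Fpot v) {w : ℂ | w.im ≠ 0} := hFd.analyticOnNhd hU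
    have hgd : DifferentiableOn ℂ (deriv (Fpot v)) {w : ℂ | w.im ≠ 0} :=
      han.deriv.differentiableOn
    set g := deriv (Fpot v) with hgdef
    set g2 := deriv g with hg2def
    have hWd : ∀ y : ℝ × ℝ, y.2 ≠ 0 → HasFDerivAt W
        (((((1 : ℂ →L[ℂ] ℂ).smulRight (g (Emap y))).restrictScalars ℝ).comp Emap) -
          ((((1 : ℂ →L[ℂ] ℂ).smulRight (g (Cmap y))).restrictScalars ℝ).comp Cmap)) y := by
      intro y hy
      rw [hWf]
      have hE : HasDerivAt (Fpot v) (g (Emap y)) (Emap y) :=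
        (hFd.differentiableAt (hU.mem_nhds (hES y hy))).hasDerivAt
      have hC : HasDerivAt (Fpot v) (g (Cmap y)) (Cmap y) :=
        (hFd.differentiableAt (hU.mem_nhds (hCS y hy))).hasDerivAt
      exact (comp_hasFDerivAt Emap hE).sub (comp_hasFDerivAt Cmap hC)
    have hEval1 : ∀ y : ℝ × ℝ, y.2 ≠ 0 →
        fderiv ℝ W y ((1:ℝ), (0:ℝ)) = g (Emap y) - g (Cmap y) := by
      intro y hy
      rw [(hWd y hy).fderiv]
      simp [ContinuousLinearMap.sub_apply, comp_eval]
    have hEval2 : ∀ y : ℝ × ℝ, y.2 ≠ 0 →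
        fderiv ℝ W y ((0:ℝ), (1:ℝ)) = Complex.I * g (Emap y) + Complex.I * g (Cmap y) := by
      intro y hy
      rw [(hWd y hy).fderiv]
      simp [ContinuousLinearMap.sub_apply, comp_eval]
    have hnhds : {y : ℝ × ℝ | y.2 ≠ 0} ∈ nhds x := isOpen_S.mem_nhds hx
    have hev1 : (fun y => fderiv ℝ W y ((1:ℝ), (0:ℝ)))
        =ᶠ[nhds x] fun y => g (Emap y) - g (Cmap y) := by
      filter_upwards [hnhds] with y hy using hEval1 y hy
    have hev2 : (fun y => fderiv ℝ W y ((0:ℝ), (1:ℝ)))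
        =ᶠ[nhds x] fun y => Complex.I * g (Emap y) + Complex.I * g (Cmap y) := by
      filter_upwards [hnhds] with y hy using hEval2 y hy
    have hgE : HasDerivAt g (g2 (Emap x)) (Emap x) :=
      (hgd.differentiableAt (hU.mem_nhds (hES x hx))).hasDerivAt
    have hgC : HasDerivAt g (g2 (Cmap x)) (Cmap x) :=
      (hgd.differentiableAt (hU.mem_nhds (hCS x hx))).hasDerivAt
    have hd1 : HasFDerivAt (fun y => g (Emap y) - g (Cmap y))
        (((((1 : ℂ →L[ℂ] ℂ).smulRight (g2 (Emap x))).restrictScalars ℝ).comp Emap) -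
          ((((1 : ℂ →L[ℂ] ℂ).smulRight (g2 (Cmap x))).restrictScalars ℝ).comp Cmap)) x :=
      (comp_hasFDerivAt Emap hgE).sub (comp_hasFDerivAt Cmap hgC)
    have hd2 : HasFDerivAt (fun y => Complex.I * g (Emap y) + Complex.I * g (Cmap y))
        ((Complex.I • ((((1 : ℂ →L[ℂ] ℂ).smulRight (g2 (Emap x))).restrictScalars ℝ).comp Emap)) +
          (Complex.I • ((((1 : ℂ →L[ℂ] ℂ).smulRight (g2 (Cmap x))).restrictScalars ℝ).comp Cmap))) x :=
      ((comp_hasFDerivAt Emap hgE).const_mul Complex.I).add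
        ((comp_hasFDerivAt Cmap hgC).const_mul Complex.I)
    unfold lapPlaneC
    rw [hev1.fderiv_eq, hev2.fderiv_eq, hd1.fderiv, hd2.fderiv]
    simp only [ContinuousLinearMap.sub_apply, ContinuousLinearMap.add_apply,
      ContinuousLinearMap.smul_apply, comp_eval, Emap_apply, Cmap_apply, smul_eq_mul]
    push_cast
    simp only [one_mul, zero_mul, mul_one, mul_zero, add_zero, zero_add, zero_sub, sub_zero]
    ring_nf
    simp [Complex.I_sq]
end

section
/- Let v : ℝ → ℂ be a continuous function with compact support. Then the single-layer potential V(x₁,x₂) = (1/(2π)) ∫_ℝ log‖(x₁,x₂) − (τ,0)‖ v(τ) dτ is harmonic on ℝ² ∖ (ℝ × {0}): it is twice continuously differentiable there and ∂²V/∂x₁² + ∂²V/∂x₂² = 0 at every point (x₁,x₂) with x₂ ≠ 0. -/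
open MeasureTheory Complex

/-! ### Auxiliary material -/

noncomputable def SLPLc (ε : ℂ) : ℝ × ℝ →L[ℝ] ℂ :=
  Complex.ofRealCLM.comp (ContinuousLinearMap.fst ℝ ℝ ℝ) +
    (ContinuousLinearMap.snd ℝ ℝ ℝ).smulRight ε

lemma SLPLc_apply (ε : ℂ) (x : ℝ × ℝ) : SLPLc ε x = ↑x.1 + ↑x.2 * ε := by
  simp [SLPLc, Complex.real_smul]

lemma SLP_hasFDerivAt_comp (ε : ℂ) {h : ℂ → ℂ} {d : ℂ} {y : ℝ × ℝ}
    (hd : HasDerivAt h d (↑y.1 + ↑y.2 * ε)) :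
    HasFDerivAt (fun x : ℝ × ℝ => h (↑x.1 + ↑x.2 * ε))
      ((((1 : ℂ →L[ℂ] ℂ).smulRight d).restrictScalars ℝ).comp (SLPLc ε)) y := by
  have heq : (⇑(SLPLc ε) : ℝ × ℝ → ℂ) = fun x : ℝ × ℝ => ↑x.1 + ↑x.2 * ε :=
    funext (SLPLc_apply ε)
  have hL : HasFDerivAt (fun x : ℝ × ℝ => (↑x.1 + ↑x.2 * ε : ℂ)) (SLPLc ε) y := by
    rw [← heq]; exact (SLPLc ε).hasFDerivAt
  exact (hd.hasFDerivAt.restrictScalars ℝ).comp y hL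

lemma SLP_comp_apply (ε : ℂ) (d : ℂ) (u : ℝ × ℝ) :
    ((((1 : ℂ →L[ℂ] ℂ).smulRight d).restrictScalars ℝ).comp (SLPLc ε)) u
      = (↑u.1 + ↑u.2 * ε) * d := by
  simp [SLPLc_apply, smul_eq_mul]

noncomputable def SLPF (v : ℝ → ℂ) (w : ℂ) : ℂ := ∫ τ : ℝ, Complex.log (w - ↑τ) * v τ

lemma SLP_integrable {v : ℝ → ℂ} (hv : Continuous v) (hsupp : HasCompactSupport v)
    {w : ℂ} (hw : w.im ≠ 0) :
    Integrable (fun τ : ℝ => Complex.log (w - ↑τ) * v τ) := by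
  apply Continuous.integrable_of_hasCompactSupport
  · refine Continuous.mul ?_ hv
    rw [continuous_iff_continuousAt]
    intro τ
    refine (continuousAt_clog ?_).comp
      ((continuous_const.sub Complex.continuous_ofReal).continuousAt)
    exact Complex.mem_slitPlane_iff.2 (Or.inr (by simpa using hw))
  · exact hsupp.mul_left

lemma SLP_hasDerivAt_F {v : ℝ → ℂ} (hv : Continuous v) (hsupp : HasCompactSupport v)
    {w : ℂ} (hw : w.im ≠ 0) :
    HasDerivAt (SLPF v) (∫ τ : ℝ, (w - ↑τ)⁻¹ * v τ) w := by
  set ε : ℝ := |w.im| / 2 with hε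
  have εpos : 0 < ε := half_pos (abs_pos.mpr hw)
  have hball : ∀ x ∈ Metric.ball w ε, ε ≤ |x.im| ∧ x.im ≠ 0 := by
    intro x hx
    have h1 : |x.im - w.im| ≤ ‖x - w‖ := by
      simpa using Complex.abs_im_le_norm (x - w)
    have h2 : ‖x - w‖ < ε := by
      rw [Metric.mem_ball, Complex.dist_eq] at hx; exact hx
    have h3 : |w.im| - ε ≤ |x.im| := by
      have := abs_sub_abs_le_abs_sub w.im x.im
      have h4 : |w.im - x.im| ≤ ε := by
        rw [abs_sub_comm]; exact (h1.trans h2.le)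
      linarith
    have h5 : ε ≤ |x.im| := by rw [hε] at h3 ⊢; linarith
    exact ⟨h5, fun h0 => by simp [h0] at h5; linarith⟩
  have hne : ∀ x ∈ Metric.ball w ε, ∀ τ : ℝ, ε ≤ ‖x - ↑τ‖ := by
    intro x hx τ
    have := (hball x hx).1
    have h1 : |(x - ↑τ).im| ≤ ‖x - ↑τ‖ := Complex.abs_im_le_norm _
    have h2 : (x - (↑τ : ℂ)).im = x.im := by simp
    rw [h2] at h1
    linarith
  have key := hasDerivAt_integral_of_dominated_loc_of_deriv_le (μ := volume)
    (F := fun (x : ℂ) (τ : ℝ) => Complex.log (x - ↑τ) * v τ)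
    (F' := fun (x : ℂ) (τ : ℝ) => (x - ↑τ)⁻¹ * v τ)
    (x₀ := w) (bound := fun τ => ε⁻¹ * ‖v τ‖) (Metric.ball_mem_nhds w εpos)
    ?_ (SLP_integrable hv hsupp hw) ?_ ?_ ?_ ?_
  · exact key.2
  · filter_upwards [Metric.ball_mem_nhds w εpos] with x hx
    exact (SLP_integrable hv hsupp (hball x hx).2).aestronglyMeasurable
  · refine Continuous.aestronglyMeasurable (Continuous.mul ?_ hv)
    refine (continuous_const.sub Complex.continuous_ofReal).inv₀ ?_
    intro τ h
    apply hw
    have := congrArg Complex.im h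
    simpa using this
  · refine Filter.Eventually.of_forall fun τ => ?_
    intro x hx
    rw [norm_mul]
    have h1 : ‖(x - (↑τ:ℂ))⁻¹‖ ≤ ε⁻¹ := by
      rw [norm_inv]
      have := hne x hx τ
      have habs : ‖x - (↑τ:ℂ)‖ = ‖x - ↑τ‖ := rfl
      rw [habs]
      exact inv_anti₀ εpos this
    exact mul_le_mul_of_nonneg_right h1 (norm_nonneg _)
  · exact ((hv.norm).integrable_of_hasCompactSupport hsupp.norm).const_mul _
  · refine Filter.Eventually.of_forall fun τ => ?_
    intro x hx
    have hm : x - (↑τ:ℂ) ∈ Complex.slitPlane :=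
      Complex.mem_slitPlane_iff.2 (Or.inr (by simpa using (hball x hx).2))
    have h1 : HasDerivAt (fun x : ℂ => x - ↑τ) 1 x := (hasDerivAt_id x).sub_const _
    have h2 := (Complex.hasDerivAt_log hm).comp x h1
    simpa using h2.mul_const (v τ)

lemma SLP_pointwise (x : ℝ × ℝ) (hx : x.2 ≠ 0) (τ : ℝ) :
    ((Real.log (Real.sqrt ((x.1 - τ) ^ 2 + x.2 ^ 2)) : ℝ) : ℂ)
      = (2:ℂ)⁻¹ * Complex.log ((↑x.1 + ↑x.2 * I) - ↑τ)
        + (2:ℂ)⁻¹ * Complex.log ((↑x.1 + ↑x.2 * (-I)) - ↑τ) := by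
  set u : ℂ := (↑x.1 + ↑x.2 * I) - ↑τ with hu
  have him : u.im = x.2 := by simp [hu]
  have hre : u.re = x.1 - τ := by simp [hu]
  have harg : u.arg ≠ Real.pi := by
    intro h
    rw [Complex.arg_eq_pi_iff] at h
    exact hx (him ▸ h.2)
  have hconj : (↑x.1 + ↑x.2 * (-I)) - (↑τ:ℂ) = starRingEnd ℂ u := by
    apply Complex.ext <;> simp [hu]
  have hlogconj : Complex.log ((↑x.1 + ↑x.2 * (-I)) - ↑τ) = starRingEnd ℂ (Complex.log u) := by
    rw [hconj, Complex.log_conj _ harg]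
  have habs : ‖u‖ = Real.sqrt ((x.1 - τ) ^ 2 + x.2 ^ 2) := by
    rw [Complex.norm_def, Complex.normSq_apply, hre, him]
    ring_nf
  have hre2 : (Complex.log u).re = Real.log (Real.sqrt ((x.1 - τ) ^ 2 + x.2 ^ 2)) := by
    rw [Complex.log_re, habs]
  calc ((Real.log (Real.sqrt ((x.1 - τ) ^ 2 + x.2 ^ 2)) : ℝ) : ℂ)
      = (2:ℂ)⁻¹ * ((2 * (Complex.log u).re : ℝ) : ℂ) := by
        rw [← hre2]; push_cast; ring
    _ = (2:ℂ)⁻¹ * (Complex.log u + starRingEnd ℂ (Complex.log u)) := by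
        rw [Complex.add_conj]
    _ = _ := by rw [hlogconj]; ring

/-- The single-layer potential of a continuous compactly supported density `v : ℝ → ℂ` is
twice continuously differentiable and harmonic off the real axis. -/
theorem single_layer_potential_harmonic
    (v : ℝ → ℂ) (hv : Continuous v) (hsupp : HasCompactSupport v)
    (V : ℝ × ℝ → ℂ)
    (hV : ∀ x : ℝ × ℝ, V x = (1 / (2 * Real.pi) : ℂ) *
      ∫ τ : ℝ, (Real.log (Real.sqrt ((x.1 - τ) ^ 2 + x.2 ^ 2)) : ℂ) * v τ) :
    ContDiffOn ℝ 2 V {x : ℝ × ℝ | x.2 ≠ 0} ∧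
      ∀ x : ℝ × ℝ, x.2 ≠ 0 → lapPlaneC V x = 0 := by
  have hSopen : IsOpen {w : ℂ | w.im ≠ 0} := isOpen_ne.preimage Complex.continuous_im
  have hS₂open : IsOpen {x : ℝ × ℝ | x.2 ≠ 0} := isOpen_ne.preimage continuous_snd
  have hdiff : DifferentiableOn ℂ (SLPF v) {w : ℂ | w.im ≠ 0} := fun w hw =>
    (SLP_hasDerivAt_F hv hsupp hw).differentiableAt.differentiableWithinAt
  have han : AnalyticOnNhd ℂ (SLPF v) {w : ℂ | w.im ≠ 0} := hdiff.analyticOnNhd hSopen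
  set G := deriv (SLPF v) with hGdef
  have hanG : AnalyticOnNhd ℂ G {w : ℂ | w.im ≠ 0} := han.deriv
  set H := deriv G with hHdef
  have hG : ∀ w : ℂ, w.im ≠ 0 → HasDerivAt (SLPF v) (G w) w := fun w hw =>
    ((han w hw).differentiableAt).hasDerivAt
  have hH : ∀ w : ℂ, w.im ≠ 0 → HasDerivAt G (H w) w := fun w hw =>
    ((hanG w hw).differentiableAt).hasDerivAt
  set cst : ℂ := (1 / (2 * Real.pi) : ℂ) * 2⁻¹ with hcst
  set W : ℝ × ℝ → ℂ := fun y =>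
    cst * SLPF v (↑y.1 + ↑y.2 * I) + cst * SLPF v (↑y.1 + ↑y.2 * (-I)) with hWdef
  have himp : ∀ y : ℝ × ℝ, y.2 ≠ 0 → ((↑y.1 + ↑y.2 * I : ℂ)).im ≠ 0 := by
    intro y hy; simpa using hy
  have himm : ∀ y : ℝ × ℝ, y.2 ≠ 0 → ((↑y.1 + ↑y.2 * (-I) : ℂ)).im ≠ 0 := by
    intro y hy; simpa using hy
  -- V agrees with W off the axis
  have hVW : ∀ y : ℝ × ℝ, y.2 ≠ 0 → V y = W y := by
    intro y hy
    rw [hV y]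
    have hpt : (fun τ : ℝ => ((Real.log (Real.sqrt ((y.1 - τ) ^ 2 + y.2 ^ 2)) : ℝ) : ℂ) * v τ)
        = fun τ : ℝ => (2:ℂ)⁻¹ * (Complex.log ((↑y.1 + ↑y.2 * I) - ↑τ) * v τ)
          + (2:ℂ)⁻¹ * (Complex.log ((↑y.1 + ↑y.2 * (-I)) - ↑τ) * v τ) := by
      funext τ
      rw [SLP_pointwise y hy τ]
      ring
    rw [hpt, integral_add (((SLP_integrable hv hsupp (himp y hy))).const_mul _)
      (((SLP_integrable hv hsupp (himm y hy))).const_mul _),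
      integral_const_mul, integral_const_mul]
    simp only [hWdef, SLPF, hcst]
    ring
  constructor
  · -- smoothness
    have hc2 : ContDiffOn ℝ 2 (SLPF v) {w : ℂ | w.im ≠ 0} :=
      ContDiffOn.restrict_scalars (𝕜 := ℝ) (hdiff.contDiffOn hSopen)
    have he : ∀ ε : ℂ, ContDiff ℝ 2 (fun x : ℝ × ℝ => (↑x.1 + ↑x.2 * ε : ℂ)) := by
      intro ε
      have := (SLPLc ε).contDiff (n := 2)
      rwa [funext (SLPLc_apply ε)] at this
    have hmp : Set.MapsTo (fun x : ℝ × ℝ => (↑x.1 + ↑x.2 * I : ℂ))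
        {x : ℝ × ℝ | x.2 ≠ 0} {w : ℂ | w.im ≠ 0} := fun y hy => himp y hy
    have hmm : Set.MapsTo (fun x : ℝ × ℝ => (↑x.1 + ↑x.2 * (-I) : ℂ))
        {x : ℝ × ℝ | x.2 ≠ 0} {w : ℂ | w.im ≠ 0} := fun y hy => himm y hy
    have hplus : ContDiffOn ℝ 2 (fun y : ℝ × ℝ => SLPF v (↑y.1 + ↑y.2 * I))
        {x : ℝ × ℝ | x.2 ≠ 0} := hc2.comp (he I).contDiffOn hmp
    have hminus : ContDiffOn ℝ 2 (fun y : ℝ × ℝ => SLPF v (↑y.1 + ↑y.2 * (-I)))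
        {x : ℝ × ℝ | x.2 ≠ 0} := hc2.comp (he (-I)).contDiffOn hmm
    exact ((contDiffOn_const.mul hplus).add (contDiffOn_const.mul hminus)).congr
      fun y hy => hVW y hy
  · -- harmonicity
    intro x hx
    have hS₂x : {y : ℝ × ℝ | y.2 ≠ 0} ∈ nhds x := hS₂open.mem_nhds hx
    have hVWev : V =ᶠ[nhds x] W := Filter.eventuallyEq_of_mem hS₂x fun y hy => hVW y hy
    have hfd := hVWev.fderiv (𝕜 := ℝ)
    set Q₁ : ℝ × ℝ → ℂ := fun y =>
      cst * G (↑y.1 + ↑y.2 * I) + cst * G (↑y.1 + ↑y.2 * (-I)) with hQ₁def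
    set Q₂ : ℝ × ℝ → ℂ := fun y =>
      cst * I * G (↑y.1 + ↑y.2 * I) + cst * (-I) * G (↑y.1 + ↑y.2 * (-I)) with hQ₂def
    have hWd : ∀ y : ℝ × ℝ, y.2 ≠ 0 → HasFDerivAt W
        (cst • ((((1 : ℂ →L[ℂ] ℂ).smulRight (G (↑y.1 + ↑y.2 * I))).restrictScalars ℝ).comp
            (SLPLc I)) +
          cst • ((((1 : ℂ →L[ℂ] ℂ).smulRight (G (↑y.1 + ↑y.2 * (-I)))).restrictScalars ℝ).comp
            (SLPLc (-I)))) y := fun y hy =>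
      ((SLP_hasFDerivAt_comp I (hG _ (himp y hy))).const_mul cst).add
        ((SLP_hasFDerivAt_comp (-I) (hG _ (himm y hy))).const_mul cst)
    have hW1 : ∀ y : ℝ × ℝ, y.2 ≠ 0 → fderiv ℝ W y ((1:ℝ), (0:ℝ)) = Q₁ y := by
      intro y hy
      rw [(hWd y hy).fderiv]
      simp only [ContinuousLinearMap.add_apply, ContinuousLinearMap.coe_smul',
        Pi.smul_apply, SLP_comp_apply, smul_eq_mul, hQ₁def]
      push_cast
      ring
    have hW2 : ∀ y : ℝ × ℝ, y.2 ≠ 0 → fderiv ℝ W y ((0:ℝ), (1:ℝ)) = Q₂ y := by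
      intro y hy
      rw [(hWd y hy).fderiv]
      simp only [ContinuousLinearMap.add_apply, ContinuousLinearMap.coe_smul',
        Pi.smul_apply, SLP_comp_apply, smul_eq_mul, hQ₂def]
      push_cast
      ring
    have hone : (fun y => fderiv ℝ V y ((1:ℝ), (0:ℝ))) =ᶠ[nhds x] Q₁ := by
      filter_upwards [hfd, hS₂x] with y h1 h2
      rw [h1, hW1 y h2]
    have htwo : (fun y => fderiv ℝ V y ((0:ℝ), (1:ℝ))) =ᶠ[nhds x] Q₂ := by
      filter_upwards [hfd, hS₂x] with y h1 h2
      rw [h1, hW2 y h2]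
    have hQ₁d : HasFDerivAt Q₁
        (cst • ((((1 : ℂ →L[ℂ] ℂ).smulRight (H (↑x.1 + ↑x.2 * I))).restrictScalars ℝ).comp
            (SLPLc I)) +
          cst • ((((1 : ℂ →L[ℂ] ℂ).smulRight (H (↑x.1 + ↑x.2 * (-I)))).restrictScalars ℝ).comp
            (SLPLc (-I)))) x :=
      ((SLP_hasFDerivAt_comp I (hH _ (himp x hx))).const_mul cst).add
        ((SLP_hasFDerivAt_comp (-I) (hH _ (himm x hx))).const_mul cst)
    have hQ₂d : HasFDerivAt Q₂
        ((cst * I) • ((((1 : ℂ →L[ℂ] ℂ).smulRight (H (↑x.1 + ↑x.2 * I))).restrictScalars ℝ).comp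
            (SLPLc I)) +
          (cst * (-I)) • ((((1 : ℂ →L[ℂ] ℂ).smulRight
            (H (↑x.1 + ↑x.2 * (-I)))).restrictScalars ℝ).comp (SLPLc (-I)))) x :=
      ((SLP_hasFDerivAt_comp I (hH _ (himp x hx))).const_mul (cst * I)).add
        ((SLP_hasFDerivAt_comp (-I) (hH _ (himm x hx))).const_mul (cst * (-I)))
    unfold lapPlaneC
    rw [hone.fderiv_eq, htwo.fderiv_eq, hQ₁d.fderiv, hQ₂d.fderiv]
    simp only [ContinuousLinearMap.add_apply, ContinuousLinearMap.coe_smul',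
      Pi.smul_apply, SLP_comp_apply, smul_eq_mul]
    push_cast
    linear_combination (cst * H (↑x.1 + ↑x.2 * I) + cst * H (↑x.1 + ↑x.2 * (-I))) * Complex.I_sq
end

section
/- Let v : ℝ → ℂ be a continuous function with compact support, and let V(x₁,x₂) = (1/(2π)) ∫_ℝ log‖(x₁,x₂) − (τ,0)‖ v(τ) dτ be its single-layer potential. Then for every (x₁,x₂) with x₂ ≠ 0 one has ∂V/∂x₂(x₁,x₂) = (1/(2π)) ∫_ℝ x₂ v(τ) / ((x₁−τ)² + x₂²) dτ, and consequently the normal derivative −∂₂V satisfies the Plemelj jump relations: lim_{x₂→0⁺} (−∂V/∂x₂)(x₁,x₂) = −v(x₁)/2 and lim_{x₂→0⁻} (−∂V/∂x₂)(x₁,x₂) = v(x₁)/2 for every x₁ ∈ ℝ. -/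
open MeasureTheory Filter Topology

noncomputable def qd (τ : ℝ) (x : ℝ × ℝ) : ℝ × ℝ →L[ℝ] ℝ :=
  (2 * (x.1 - τ)) • ContinuousLinearMap.fst ℝ ℝ ℝ + (2 * x.2) • ContinuousLinearMap.snd ℝ ℝ ℝ

lemma hasFDerivAt_q (τ : ℝ) (x : ℝ × ℝ) :
    HasFDerivAt (fun y : ℝ × ℝ => (y.1 - τ) ^ 2 + y.2 ^ 2) (qd τ x) x := by
  have h1 : HasFDerivAt (fun y : ℝ × ℝ => y.1 - τ) (ContinuousLinearMap.fst ℝ ℝ ℝ) x :=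
    (hasFDerivAt_fst).sub_const τ
  have h2 : HasFDerivAt (fun y : ℝ × ℝ => y.2) (ContinuousLinearMap.snd ℝ ℝ ℝ) x :=
    hasFDerivAt_snd
  have h := (h1.mul h1).add (h2.mul h2)
  have hfe : (fun y : ℝ × ℝ => (y.1 - τ) ^ 2 + y.2 ^ 2)
      = fun y : ℝ × ℝ => (y.1 - τ) * (y.1 - τ) + y.2 * y.2 := by
    funext y; ring
  rw [hfe]
  exact h.congr_fderiv (by ext <;> simp [qd] <;> ring)

noncomputable def Fd (v : ℝ → ℂ) (x : ℝ × ℝ) (τ : ℝ) : ℝ × ℝ →L[ℝ] ℂ :=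
  v τ • (Complex.ofRealCLM.comp ((((x.1 - τ) ^ 2 + x.2 ^ 2)⁻¹ / 2) • qd τ x))

lemma Fd_apply (v : ℝ → ℂ) (x : ℝ × ℝ) (τ : ℝ) (h : ℝ × ℝ) :
    Fd v x τ h = v τ * ((((x.1 - τ) ^ 2 + x.2 ^ 2)⁻¹ / 2) *
      (2 * (x.1 - τ) * h.1 + 2 * x.2 * h.2) : ℝ) := by
  simp [Fd, qd, mul_add]

lemma Fd_norm_le (v : ℝ → ℂ) (τ : ℝ) (y : ℝ × ℝ) (hy : y.2 ≠ 0) :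
    ‖Fd v y τ‖ ≤ 2 / |y.2| * ‖v τ‖ := by
  have hq : (0:ℝ) < (y.1 - τ) ^ 2 + y.2 ^ 2 := by positivity
  set q : ℝ := (y.1 - τ) ^ 2 + y.2 ^ 2 with hqdef
  have hb : (0:ℝ) < |y.2| := abs_pos.2 hy
  have hsq : (0:ℝ) < Real.sqrt q := Real.sqrt_pos.2 hq
  have ha1 : |y.1 - τ| ≤ Real.sqrt q := by
    rw [← Real.sqrt_sq_eq_abs]
    exact Real.sqrt_le_sqrt (by nlinarith)
  have ha2 : |y.2| ≤ Real.sqrt q := by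
    rw [← Real.sqrt_sq_eq_abs]
    exact Real.sqrt_le_sqrt (by nlinarith)
  have hmul : Real.sqrt q * Real.sqrt q = q := Real.mul_self_sqrt hq.le
  rw [show (2 / |y.2| * ‖v τ‖ : ℝ) = ‖v τ‖ * (2 / |y.2|) by ring]
  apply ContinuousLinearMap.opNorm_le_bound _ (by positivity)
  intro h
  rw [Fd_apply]
  rw [norm_mul, Complex.norm_real, Real.norm_eq_abs]
  have h1 : |h.1| ≤ ‖h‖ := by
    rw [← Real.norm_eq_abs]; exact norm_fst_le h
  have h2 : |h.2| ≤ ‖h‖ := by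
    rw [← Real.norm_eq_abs]; exact norm_snd_le h
  have key : |q⁻¹ / 2 * (2 * (y.1 - τ) * h.1 + 2 * y.2 * h.2)| ≤ 2 / |y.2| * ‖h‖ := by
    have e1 : |q⁻¹ / 2 * (2 * (y.1 - τ) * h.1 + 2 * y.2 * h.2)|
        ≤ q⁻¹ / 2 * (2 * |y.1 - τ| * |h.1| + 2 * |y.2| * |h.2|) := by
      rw [abs_mul, abs_of_nonneg (by positivity : (0:ℝ) ≤ q⁻¹ / 2)]
      gcongr
      calc |2 * (y.1 - τ) * h.1 + 2 * y.2 * h.2|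
          ≤ |2 * (y.1 - τ) * h.1| + |2 * y.2 * h.2| := abs_add_le _ _
        _ = 2 * |y.1 - τ| * |h.1| + 2 * |y.2| * |h.2| := by
            rw [abs_mul, abs_mul, abs_mul, abs_mul]; norm_num
    refine e1.trans ?_
    have e2 : 2 * |y.1 - τ| * |h.1| + 2 * |y.2| * |h.2|
        ≤ 4 * Real.sqrt q * ‖h‖ := by
      have hn : (0:ℝ) ≤ ‖h‖ := norm_nonneg _
      nlinarith [mul_le_mul ha1 h1 (abs_nonneg _) hsq.le,
        mul_le_mul ha2 h2 (abs_nonneg _) hsq.le]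
    have e3 : q⁻¹ / 2 * (4 * Real.sqrt q * ‖h‖) = 2 / Real.sqrt q * ‖h‖ := by
      have hqi : q⁻¹ = (Real.sqrt q)⁻¹ * (Real.sqrt q)⁻¹ := by rw [← mul_inv, hmul]
      rw [hqi]
      generalize hsg : Real.sqrt q = s at hsq
      field_simp
      ring
    calc q⁻¹ / 2 * (2 * |y.1 - τ| * |h.1| + 2 * |y.2| * |h.2|)
        ≤ q⁻¹ / 2 * (4 * Real.sqrt q * ‖h‖) := by gcongr <;> positivity
      _ = 2 / Real.sqrt q * ‖h‖ := e3
      _ ≤ 2 / |y.2| * ‖h‖ := by gcongr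
  calc ‖v τ‖ * |q⁻¹ / 2 * (2 * (y.1 - τ) * h.1 + 2 * y.2 * h.2)|
      ≤ ‖v τ‖ * (2 / |y.2| * ‖h‖) := by gcongr
    _ = ‖v τ‖ * (2 / |y.2|) * ‖h‖ := by ring

lemma hasFDerivAt_F (v : ℝ → ℂ) (τ : ℝ) (y : ℝ × ℝ) (hy : y.2 ≠ 0) :
    HasFDerivAt (fun x : ℝ × ℝ => (Real.log (Real.sqrt ((x.1 - τ) ^ 2 + x.2 ^ 2)) : ℂ) * v τ)
      (Fd v y τ) y := by
  have hq : (0:ℝ) < (y.1 - τ) ^ 2 + y.2 ^ 2 := by positivity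
  have hlog : HasFDerivAt (fun x : ℝ × ℝ => Real.log ((x.1 - τ) ^ 2 + x.2 ^ 2))
      ((((y.1 - τ) ^ 2 + y.2 ^ 2)⁻¹ : ℝ) • qd τ y) y :=
    HasDerivAt.comp_hasFDerivAt (h₂ := Real.log) (f := fun x : ℝ × ℝ => (x.1 - τ) ^ 2 + x.2 ^ 2) y
      (Real.hasDerivAt_log hq.ne') (hasFDerivAt_q τ y)
  have h2 : HasFDerivAt (fun x : ℝ × ℝ => Real.log (Real.sqrt ((x.1 - τ) ^ 2 + x.2 ^ 2)))
      ((((y.1 - τ) ^ 2 + y.2 ^ 2)⁻¹ / 2 : ℝ) • qd τ y) y := by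
    have hfe : (fun x : ℝ × ℝ => Real.log (Real.sqrt ((x.1 - τ) ^ 2 + x.2 ^ 2)))
        = fun x : ℝ × ℝ => (1/2 : ℝ) • Real.log ((x.1 - τ) ^ 2 + x.2 ^ 2) := by
      funext z
      rw [Real.log_sqrt (by positivity)]
      simp [smul_eq_mul]
      ring
    rw [hfe]
    have := hlog.const_smul (1/2 : ℝ)
    refine this.congr_fderiv ?_
    rw [smul_smul]
    congr 1
    ring
  have h3 := Complex.ofRealCLM.hasFDerivAt.comp y h2
  exact h3.mul_const (v τ)

lemma continuous_Fd (v : ℝ → ℂ) (hv : Continuous v) (x : ℝ × ℝ) (hx : x.2 ≠ 0) :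
    Continuous (fun τ : ℝ => Fd v x τ) := by
  have hq : ∀ τ : ℝ, ((x.1 - τ) ^ 2 + x.2 ^ 2) ≠ 0 := fun τ => by positivity
  have hqd : Continuous (fun τ : ℝ => qd τ x) := by
    unfold qd
    exact ((continuous_const.mul (continuous_const.sub continuous_id)).smul
      continuous_const).add continuous_const
  have hc : Continuous (fun τ : ℝ => (((x.1 - τ) ^ 2 + x.2 ^ 2)⁻¹ / 2 : ℝ)) := by
    apply Continuous.div_const
    exact (((continuous_const.sub continuous_id).pow 2).add continuous_const).inv₀ hq
  exact hv.smul (continuous_const.clm_comp (hc.smul hqd))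

lemma hascompact_Fd (v : ℝ → ℂ) (hsupp : HasCompactSupport v) (x : ℝ × ℝ) :
    HasCompactSupport (fun τ : ℝ => Fd v x τ) := by
  apply HasCompactSupport.intro hsupp
  intro τ hτ
  have : v τ = 0 := image_eq_zero_of_notMem_tsupport hτ
  show Fd v x τ = 0
  apply ContinuousLinearMap.ext
  intro h
  simp [Fd, this]

lemma integrable_Fd (v : ℝ → ℂ) (hv : Continuous v) (hsupp : HasCompactSupport v)
    (x : ℝ × ℝ) (hx : x.2 ≠ 0) : Integrable (fun τ : ℝ => Fd v x τ) :=
  (continuous_Fd v hv x hx).integrable_of_hasCompactSupport (hascompact_Fd v hsupp x)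

lemma continuous_F (v : ℝ → ℂ) (hv : Continuous v) (x : ℝ × ℝ) (hx : x.2 ≠ 0) :
    Continuous (fun τ : ℝ => (Real.log (Real.sqrt ((x.1 - τ) ^ 2 + x.2 ^ 2)) : ℂ) * v τ) := by
  have hq : ∀ τ : ℝ, ((x.1 - τ) ^ 2 + x.2 ^ 2) ≠ 0 := fun τ => by positivity
  have hcont : Continuous (fun τ : ℝ => Real.log (Real.sqrt ((x.1 - τ) ^ 2 + x.2 ^ 2))) := by
    apply Continuous.log
    · exact (((continuous_const.sub continuous_id).pow 2).add continuous_const).sqrt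
    · intro τ
      exact (Real.sqrt_pos.2 (lt_of_le_of_ne (by positivity) (Ne.symm (hq τ)))).ne'
  exact ((Complex.continuous_ofReal.comp hcont).mul hv)

lemma integrable_F (v : ℝ → ℂ) (hv : Continuous v) (hsupp : HasCompactSupport v)
    (x : ℝ × ℝ) (hx : x.2 ≠ 0) :
    Integrable (fun τ : ℝ => (Real.log (Real.sqrt ((x.1 - τ) ^ 2 + x.2 ^ 2)) : ℂ) * v τ) :=
  (continuous_F v hv x hx).integrable_of_hasCompactSupport hsupp.mul_left

lemma ball_snd_ne {x₁ x₂ : ℝ} (hx₂ : x₂ ≠ 0) {y : ℝ × ℝ}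
    (hy : y ∈ Metric.ball ((x₁, x₂) : ℝ × ℝ) (|x₂| / 2)) : |x₂| / 2 ≤ |y.2| := by
  have hd : dist y.2 x₂ ≤ dist y (x₁, x₂) := le_max_right _ _
  rw [Metric.mem_ball] at hy
  have := lt_of_le_of_lt hd hy
  rw [Real.dist_eq] at this
  have h1 := abs_sub_abs_le_abs_sub x₂ y.2
  rw [abs_sub_comm] at h1
  linarith

lemma hasFDeriv_main (v : ℝ → ℂ) (hv : Continuous v) (hsupp : HasCompactSupport v)
    (x₁ x₂ : ℝ) (hx₂ : x₂ ≠ 0) :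
    HasFDerivAt (fun x : ℝ × ℝ =>
        ∫ τ : ℝ, (Real.log (Real.sqrt ((x.1 - τ) ^ 2 + x.2 ^ 2)) : ℂ) * v τ)
      (∫ τ : ℝ, Fd v (x₁, x₂) τ) (x₁, x₂) := by
  have hb : (0:ℝ) < |x₂| / 2 := by positivity
  apply hasFDerivAt_integral_of_dominated_of_fderiv_le (s := Metric.ball (x₁, x₂) (|x₂| / 2))
    (bound := fun τ => 4 / |x₂| * ‖v τ‖) (F' := fun x τ => Fd v x τ) (Metric.ball_mem_nhds _ hb)
  · have hev : ∀ᶠ y : ℝ × ℝ in 𝓝 (x₁, x₂), y.2 ≠ 0 := by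
      have : Continuous (fun y : ℝ × ℝ => y.2) := continuous_snd
      exact this.continuousAt.eventually_ne (by simpa using hx₂)
    filter_upwards [hev] with y hy
    exact (continuous_F v hv y hy).aestronglyMeasurable
  · exact integrable_F v hv hsupp (x₁, x₂) hx₂
  · exact (continuous_Fd v hv (x₁, x₂) hx₂).aestronglyMeasurable
  · refine ae_of_all _ fun τ => fun y hy => ?_
    have hy2 : |x₂| / 2 ≤ |y.2| := ball_snd_ne hx₂ hy
    have hy2' : y.2 ≠ 0 := by
      intro h; rw [h, abs_zero] at hy2; linarith
    refine (Fd_norm_le v τ y hy2').trans ?_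
    have h24 : 2 / |y.2| ≤ 4 / |x₂| := by
      rw [div_le_div_iff₀ (by linarith) (by positivity)]
      linarith
    exact mul_le_mul_of_nonneg_right h24 (norm_nonneg _)
  · exact (hv.norm.integrable_of_hasCompactSupport hsupp.norm).const_mul _
  · refine ae_of_all _ fun τ => fun y hy => ?_
    have hy2 : |x₂| / 2 ≤ |y.2| := ball_snd_ne hx₂ hy
    have hy2' : y.2 ≠ 0 := by
      intro h; rw [h, abs_zero] at hy2; linarith
    exact hasFDerivAt_F v τ y hy2'

lemma part1 (v : ℝ → ℂ) (hv : Continuous v) (hsupp : HasCompactSupport v)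
    (V : ℝ × ℝ → ℂ)
    (hV : ∀ x : ℝ × ℝ, V x = (1 / (2 * Real.pi) : ℂ) *
      ∫ τ : ℝ, (Real.log (Real.sqrt ((x.1 - τ) ^ 2 + x.2 ^ 2)) : ℂ) * v τ)
    (x₁ x₂ : ℝ) (hx₂ : x₂ ≠ 0) :
    fderiv ℝ V (x₁, x₂) ((0:ℝ), (1:ℝ)) =
      (1 / (2 * Real.pi) : ℂ) * ∫ τ : ℝ, ((x₂ / ((x₁ - τ) ^ 2 + x₂ ^ 2) : ℝ) : ℂ) * v τ := by
  have hV' : V = fun x : ℝ × ℝ => (1 / (2 * Real.pi) : ℂ) *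
      ∫ τ : ℝ, (Real.log (Real.sqrt ((x.1 - τ) ^ 2 + x.2 ^ 2)) : ℂ) * v τ := funext hV
  have hD := (hasFDeriv_main v hv hsupp x₁ x₂ hx₂).const_mul (1 / (2 * Real.pi) : ℂ)
  rw [hV', hD.fderiv]
  rw [ContinuousLinearMap.smul_apply]
  rw [ContinuousLinearMap.integral_apply (integrable_Fd v hv hsupp (x₁, x₂) hx₂)]
  rw [smul_eq_mul]
  congr 1
  apply integral_congr_ae
  refine ae_of_all _ fun τ => ?_
  show Fd v (x₁, x₂) τ ((0:ℝ), (1:ℝ)) = _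
  rw [Fd_apply]
  have hq : ((x₁ - τ) ^ 2 + x₂ ^ 2 : ℝ) ≠ 0 := by positivity
  have hh : ((((x₁, x₂).1 - τ) ^ 2 + (x₁, x₂).2 ^ 2)⁻¹ / 2 *
      (2 * ((x₁, x₂).1 - τ) * (0:ℝ) + 2 * (x₁, x₂).2 * (1:ℝ)) : ℝ)
      = (x₂ / ((x₁ - τ) ^ 2 + x₂ ^ 2) : ℝ) := by
    simp only []
    field_simp
    ring
  rw [hh, mul_comm]

lemma cov (v : ℝ → ℂ) (x₁ : ℝ) {x₂ : ℝ} (h : x₂ ≠ 0) :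
    ∫ τ : ℝ, ((x₂ / ((x₁ - τ) ^ 2 + x₂ ^ 2) : ℝ) : ℂ) * v τ
      = (|x₂| / x₂ : ℝ) • ∫ u : ℝ, (((1 + u ^ 2)⁻¹ : ℝ) : ℂ) * v (x₁ + x₂ * u) := by
  have h1 : ∫ τ : ℝ, ((x₂ / ((x₁ - τ) ^ 2 + x₂ ^ 2) : ℝ) : ℂ) * v τ
      = ∫ u : ℝ, ((x₂ / (u ^ 2 + x₂ ^ 2) : ℝ) : ℂ) * v (x₁ + u) := by
    rw [← integral_add_left_eq_self
      (fun τ : ℝ => ((x₂ / ((x₁ - τ) ^ 2 + x₂ ^ 2) : ℝ) : ℂ) * v τ) x₁]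
    congr 1
    funext u
    have : (x₁ - (x₁ + u)) ^ 2 = u ^ 2 := by ring
    rw [this]
  rw [h1]
  have h2 := MeasureTheory.Measure.integral_comp_mul_left
    (fun u : ℝ => ((x₂ / (u ^ 2 + x₂ ^ 2) : ℝ) : ℂ) * v (x₁ + u)) x₂
  have h3 : ∫ u : ℝ, ((x₂ / (u ^ 2 + x₂ ^ 2) : ℝ) : ℂ) * v (x₁ + u)
      = |x₂| • ∫ u : ℝ, ((x₂ / ((x₂ * u) ^ 2 + x₂ ^ 2) : ℝ) : ℂ) * v (x₁ + x₂ * u) := by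
    rw [h2, smul_smul, abs_inv, mul_inv_cancel₀ (abs_ne_zero.2 h), one_smul]
  rw [h3]
  have h4 : ∀ u : ℝ, ((x₂ / ((x₂ * u) ^ 2 + x₂ ^ 2) : ℝ) : ℂ) * v (x₁ + x₂ * u)
      = (x₂⁻¹ : ℝ) • ((((1 + u ^ 2)⁻¹ : ℝ) : ℂ) * v (x₁ + x₂ * u)) := by
    intro u
    have hd : ((x₂ * u) ^ 2 + x₂ ^ 2 : ℝ) = x₂ ^ 2 * (1 + u ^ 2) := by ring
    have hne : (1 + u ^ 2 : ℝ) ≠ 0 := by positivity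
    rw [hd]
    rw [Complex.real_smul]
    rw [← mul_assoc]
    congr 1
    rw [← Complex.ofReal_mul]
    congr 1
    field_simp
  simp_rw [h4]
  rw [integral_smul, smul_smul]
  congr 1

lemma poisson_limit (v : ℝ → ℂ) (hv : Continuous v) (hsupp : HasCompactSupport v) (x₁ : ℝ) :
    Tendsto (fun t : ℝ => ∫ u : ℝ, (((1 + u ^ 2)⁻¹ : ℝ) : ℂ) * v (x₁ + t * u)) (𝓝 0)
      (𝓝 ((Real.pi : ℂ) * v x₁)) := by
  obtain ⟨C, hC⟩ := hsupp.exists_bound_of_continuous hv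
  have key : Tendsto (fun t : ℝ => ∫ u : ℝ, (((1 + u ^ 2)⁻¹ : ℝ) : ℂ) * v (x₁ + t * u)) (𝓝 0)
      (𝓝 (∫ u : ℝ, (((1 + u ^ 2)⁻¹ : ℝ) : ℂ) * v x₁)) := by
    apply tendsto_integral_filter_of_dominated_convergence
      (bound := fun u : ℝ => (1 + u ^ 2)⁻¹ * C)
    · refine Eventually.of_forall fun t => ?_
      apply Continuous.aestronglyMeasurable
      have hk : Continuous (fun u : ℝ => (((1 + u ^ 2)⁻¹ : ℝ) : ℂ)) := by
        apply Complex.continuous_ofReal.comp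
        exact (continuous_const.add (continuous_id.pow 2)).inv₀ (fun u => (by positivity : (1:ℝ) + u ^ 2 ≠ 0))
      exact hk.mul (hv.comp (continuous_const.add (continuous_const.mul continuous_id)))
    · refine Eventually.of_forall fun t => ae_of_all _ fun u => ?_
      rw [norm_mul, Complex.norm_real, Real.norm_eq_abs, abs_of_nonneg (by positivity)]
      gcongr
      exact hC _
    · exact integrable_inv_one_add_sq.mul_const C
    · refine ae_of_all _ fun u => ?_
      have hc : Continuous (fun t : ℝ => (((1 + u ^ 2)⁻¹ : ℝ) : ℂ) * v (x₁ + t * u)) :=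
        continuous_const.mul (hv.comp (continuous_const.add (continuous_id.mul
          continuous_const)))
      have := hc.tendsto 0
      simpa using this
  have heq : (∫ u : ℝ, (((1 + u ^ 2)⁻¹ : ℝ) : ℂ) * v x₁) = (Real.pi : ℂ) * v x₁ := by
    rw [integral_mul_const]
    congr 1
    have h0 := Complex.ofRealCLM.integral_comp_comm integrable_inv_one_add_sq
    simp only [Complex.ofRealCLM_apply] at h0
    rw [h0, integral_univ_inv_one_add_sq]
  rwa [heq] at key

/-- For the single-layer potential `V` of a continuous compactly supported density `v`, the
normal derivative `∂₂V` off the real axis is the double-layer (Poisson) potential of `v`, and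
`−∂₂V` satisfies the Plemelj jump relations at the boundary. -/
theorem single_layer_normal_derivative_jump_relations
    (v : ℝ → ℂ) (hv : Continuous v) (hsupp : HasCompactSupport v)
    (V : ℝ × ℝ → ℂ)
    (hV : ∀ x : ℝ × ℝ, V x = (1 / (2 * Real.pi) : ℂ) *
      ∫ τ : ℝ, (Real.log (Real.sqrt ((x.1 - τ) ^ 2 + x.2 ^ 2)) : ℂ) * v τ) :
    (∀ x₁ x₂ : ℝ, x₂ ≠ 0 →
      fderiv ℝ V (x₁, x₂) ((0:ℝ), (1:ℝ)) =
        (1 / (2 * Real.pi) : ℂ) *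
          ∫ τ : ℝ, ((x₂ / ((x₁ - τ) ^ 2 + x₂ ^ 2) : ℝ) : ℂ) * v τ) ∧
    (∀ x₁ : ℝ,
      Tendsto (fun x₂ : ℝ => -(fderiv ℝ V (x₁, x₂) ((0:ℝ), (1:ℝ))))
        (nhdsWithin 0 (Set.Ioi 0)) (nhds (-(v x₁) / 2)) ∧
      Tendsto (fun x₂ : ℝ => -(fderiv ℝ V (x₁, x₂) ((0:ℝ), (1:ℝ))))
        (nhdsWithin 0 (Set.Iio 0)) (nhds (v x₁ / 2))) := by
  have hπ : (Real.pi : ℂ) ≠ 0 := Complex.ofReal_ne_zero.2 Real.pi_ne_zero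
  refine ⟨part1 v hv hsupp V hV, fun x₁ => ?_⟩
  set c : ℂ := (1 / (2 * Real.pi) : ℂ) with hc
  have hGlim := poisson_limit v hv hsupp x₁
  constructor
  · have hev : (fun x₂ : ℝ => -(c * ∫ u : ℝ, (((1 + u ^ 2)⁻¹ : ℝ) : ℂ) * v (x₁ + x₂ * u)))
        =ᶠ[𝓝[>] (0:ℝ)] fun x₂ : ℝ => -(fderiv ℝ V (x₁, x₂) ((0:ℝ), (1:ℝ))) := by
      filter_upwards [self_mem_nhdsWithin] with x₂ hx
      have hne : x₂ ≠ 0 := ne_of_gt hx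
      rw [part1 v hv hsupp V hV x₁ x₂ hne, cov v x₁ hne, abs_of_pos hx, div_self hne, one_smul]
    have hlim : Tendsto (fun x₂ : ℝ =>
        -(c * ∫ u : ℝ, (((1 + u ^ 2)⁻¹ : ℝ) : ℂ) * v (x₁ + x₂ * u)))
        (𝓝[>] (0:ℝ)) (𝓝 (-(c * ((Real.pi : ℂ) * v x₁)))) :=
      ((hGlim.mono_left nhdsWithin_le_nhds).const_mul c).neg
    have hval : -(c * ((Real.pi : ℂ) * v x₁)) = -(v x₁) / 2 := by
      rw [hc]; field_simp
    exact hval ▸ hlim.congr' hev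
  · have hev : (fun x₂ : ℝ => c * ∫ u : ℝ, (((1 + u ^ 2)⁻¹ : ℝ) : ℂ) * v (x₁ + x₂ * u))
        =ᶠ[𝓝[<] (0:ℝ)] fun x₂ : ℝ => -(fderiv ℝ V (x₁, x₂) ((0:ℝ), (1:ℝ))) := by
      filter_upwards [self_mem_nhdsWithin] with x₂ hx
      have hne : x₂ ≠ 0 := ne_of_lt hx
      have habs : (|x₂| / x₂ : ℝ) = -1 := by
        rw [abs_of_neg hx]; field_simp
      rw [part1 v hv hsupp V hV x₁ x₂ hne, cov v x₁ hne, habs]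
      rw [neg_smul, one_smul, mul_neg, neg_neg]
    have hlim : Tendsto (fun x₂ : ℝ =>
        c * ∫ u : ℝ, (((1 + u ^ 2)⁻¹ : ℝ) : ℂ) * v (x₁ + x₂ * u))
        (𝓝[<] (0:ℝ)) (𝓝 (c * ((Real.pi : ℂ) * v x₁))) :=
      (hGlim.mono_left nhdsWithin_le_nhds).const_mul c
    have hval : c * ((Real.pi : ℂ) * v x₁) = v x₁ / 2 := by
      rw [hc]; field_simp
    exact hval ▸ hlim.congr' hev
end

section
/- Let c ∈ ℂ with c ∉ (−∞,0] (i.e. c is not zero and not a negative real number), and let z ∈ ℂ with 0 < Re z < 1. Then ∫₀^∞ t^{z−1}/(t + c) dt = π c^{z−1} / sin(π z), where the integral converges absolutely. Equivalently, the Mellin symbol of the operator K¹_c with kernel (1/π)(t+c)⁻¹ at the point z equals c^{z−1}/sin(π z). -/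
open MeasureTheory Set Complex

lemma isPreconnected_slitPlane' : IsPreconnected Complex.slitPlane := by
  apply isPreconnected_of_forall (1 : ℂ)
  intro y hy
  exact ⟨segment ℝ 1 y, Complex.starConvex_one_slitPlane.segment_subset hy,
    left_mem_segment ℝ 1 y, right_mem_segment ℝ 1 y, (convex_segment 1 y).isPreconnected⟩

lemma integrable_piecewise (x y A B M : ℝ) (hx : -1 < x) (hy : y < -1) (hM : 0 < M) :
    IntegrableOn (fun t : ℝ => if t ≤ M then A * t ^ x else B * t ^ y) (Ioi (0:ℝ)) := by
  have hsplit : Ioi (0:ℝ) = Ioc 0 M ∪ Ioi M := (Ioc_union_Ioi_eq_Ioi hM.le).symm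
  rw [hsplit]
  apply IntegrableOn.union
  · apply IntegrableOn.congr_fun (f := fun t : ℝ => A * t ^ x)
    · have := intervalIntegral.intervalIntegrable_rpow' (a := 0) (b := M) hx
      rw [intervalIntegrable_iff_integrableOn_Ioc_of_le hM.le] at this
      exact this.const_mul A
    · intro t ht; exact (if_pos ht.2).symm
    · exact measurableSet_Ioc
  · apply IntegrableOn.congr_fun (f := fun t : ℝ => B * t ^ y)
    · exact (integrableOn_Ioi_rpow_of_lt hy hM).const_mul B
    · intro t ht; exact (if_neg (not_le.mpr ht)).symm
    · exact measurableSet_Ioi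

lemma aesm_aux {c : ℂ} (w : ℂ) (h : ∀ t : ℝ, 0 < t → (t:ℂ) + c ≠ 0) :
    AEStronglyMeasurable (fun t : ℝ => (t:ℂ) ^ w / ((t:ℂ) + c)) (volume.restrict (Ioi 0)) := by
  apply ContinuousOn.aestronglyMeasurable _ measurableSet_Ioi
  intro t ht
  have ht' : (0:ℝ) < t := ht
  apply ContinuousWithinAt.div
  · exact (Complex.continuousAt_ofReal_cpow_const t w (Or.inr ht'.ne')).continuousWithinAt
  · exact (Complex.continuous_ofReal.add continuous_const).continuousWithinAt
  · exact h t ht'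

lemma aesm_sq {c : ℂ} (w : ℂ) (h : ∀ t : ℝ, 0 < t → (t:ℂ) + c ≠ 0) :
    AEStronglyMeasurable (fun t : ℝ => -((t:ℂ) ^ w / ((t:ℂ) + c) ^ 2))
      (volume.restrict (Ioi 0)) := by
  apply AEStronglyMeasurable.neg
  apply ContinuousOn.aestronglyMeasurable _ measurableSet_Ioi
  intro t ht
  have ht' : (0:ℝ) < t := ht
  apply ContinuousWithinAt.div
  · exact (Complex.continuousAt_ofReal_cpow_const t w (Or.inr ht'.ne')).continuousWithinAt
  · exact ((Complex.continuous_ofReal.add continuous_const).pow 2).continuousWithinAt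
  · exact pow_ne_zero 2 (h t ht')

lemma lower_bound {c : ℂ} (hc : c ∈ Complex.slitPlane) :
    ∃ ε > 0, ∀ t : ℝ, 0 ≤ t → ε ≤ ‖(t : ℂ) + c‖ := by
  rcases Complex.mem_slitPlane_iff.mp hc with h | h
  · refine ⟨c.re, h, fun t ht => ?_⟩
    calc c.re ≤ ((t:ℂ) + c).re := by simp; linarith
    _ ≤ ‖(t:ℂ) + c‖ := Complex.re_le_norm _
  · refine ⟨|c.im|, abs_pos.mpr h, fun t ht => ?_⟩
    calc |c.im| = |((t:ℂ) + c).im| := by simp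
    _ ≤ ‖(t:ℂ) + c‖ := Complex.abs_im_le_norm _

lemma norm_f {c w : ℂ} {t : ℝ} (ht : 0 < t) :
    ‖(t:ℂ) ^ w / ((t:ℂ) + c)‖ = t ^ w.re / ‖(t:ℂ) + c‖ := by
  rw [norm_div,
    Complex.norm_cpow_eq_rpow_re_of_pos ht]

lemma abs_add_ge {c : ℂ} (t : ℝ) :
    ‖(t:ℂ)‖ - ‖c‖ ≤ ‖(t:ℂ) + c‖ := by
  have := norm_add_le ((t:ℂ) + c) (-c)
  simp only [add_neg_cancel_right, norm_neg] at this
  linarith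

lemma ne_zero_of_lb {c : ℂ} {ε : ℝ} (hε : 0 < ε)
    (hl : ∀ t : ℝ, 0 ≤ t → ε ≤ ‖(t:ℂ) + c‖) :
    ∀ t : ℝ, 0 < t → (t:ℂ) + c ≠ 0 := by
  intro t ht h
  have := hl t ht.le
  rw [h] at this
  simp at this
  linarith

lemma integrableOn_f {c z : ℂ} (hz0 : 0 < z.re) (hz1 : z.re < 1) {ε : ℝ} (hε : 0 < ε)
    (hl : ∀ t : ℝ, 0 ≤ t → ε ≤ ‖(t:ℂ) + c‖) :
    IntegrableOn (fun t : ℝ => (t:ℂ) ^ (z - 1) / ((t:ℂ) + c)) (Ioi 0) := by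
  set x := z.re with hx
  set M := max 1 (2 * ‖c‖) with hM
  have hM1 : (0:ℝ) < M := lt_of_lt_of_le one_pos (le_max_left _ _)
  apply Integrable.mono'
    (integrable_piecewise (x - 1) (x - 2) ε⁻¹ 2 M (by linarith) (by linarith) hM1)
    (aesm_aux (z - 1) (ne_zero_of_lb hε hl))
  rw [ae_restrict_iff' measurableSet_Ioi]
  refine ae_of_all _ fun t ht => ?_
  have ht' : (0:ℝ) < t := ht
  rw [norm_f ht']
  have hre : (z - 1).re = x - 1 := by simp [hx]
  rw [hre]
  have htp : (0:ℝ) ≤ t ^ (x - 1) := Real.rpow_nonneg ht'.le _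
  by_cases hcase : t ≤ M
  · rw [if_pos hcase]
    calc t ^ (x-1) / ‖(t:ℂ) + c‖ ≤ t ^ (x-1) / ε :=
      div_le_div_of_nonneg_left htp hε (hl t ht'.le)
    _ = ε⁻¹ * t ^ (x-1) := by rw [div_eq_inv_mul]
  · rw [if_neg hcase]
    push_neg at hcase
    have habs : t / 2 ≤ ‖(t:ℂ) + c‖ := by
      have h1 := abs_add_ge (c := c) t
      have h2 : ‖(t:ℂ)‖ = t := by
        rw [Complex.norm_of_nonneg ht'.le]
      have h3 : 2 * ‖c‖ ≤ M := le_max_right _ _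
      linarith
    have e : t ^ (x-2) = t ^ (x-1) / t := by
      rw [show x - 2 = (x-1) - 1 by ring, Real.rpow_sub ht', Real.rpow_one]
    calc t ^ (x-1) / ‖(t:ℂ) + c‖ ≤ t ^ (x-1) / (t/2) :=
      div_le_div_of_nonneg_left htp (by linarith) habs
    _ = 2 * t ^ (x-2) := by rw [e]; field_simp

lemma differentiableAt_F {z : ℂ} (hz0 : 0 < z.re) (hz1 : z.re < 1) {c : ℂ}
    (hc : c ∈ Complex.slitPlane) :
    DifferentiableAt ℂ (fun w => ∫ t in Ioi (0:ℝ), (t:ℂ) ^ (z - 1) / ((t:ℂ) + w)) c := by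
  obtain ⟨ε, hε, hl⟩ := lower_bound hc
  set x := z.re with hx
  set M := max 1 (2 * (‖c‖ + ε)) with hM
  have hM1 : (0:ℝ) < M := lt_of_lt_of_le one_pos (le_max_left _ _)
  have key : ∀ w ∈ Metric.ball c (ε/2), ∀ t : ℝ, 0 ≤ t →
      ε/2 ≤ ‖(t:ℂ) + w‖ := by
    intro w hw t ht
    have h1 : ‖w - c‖ < ε/2 := by rwa [Metric.mem_ball, Complex.dist_eq] at hw
    have h2 := hl t ht
    have h3 : ‖(t:ℂ) + c‖ - ‖w - c‖ ≤ ‖(t:ℂ) + w‖ := by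
      have h4 := norm_add_le ((t:ℂ) + w) (c - w)
      have h5 : (t:ℂ) + w + (c - w) = (t:ℂ) + c := by ring
      rw [h5] at h4
      have h6 : ‖c - w‖ = ‖w - c‖ := by
        rw [← norm_neg (c - w)]; ring_nf
      linarith
    linarith
  have hne : ∀ w ∈ Metric.ball c (ε/2), ∀ t : ℝ, 0 < t → (t:ℂ) + w ≠ 0 := by
    intro w hw t ht
    exact ne_zero_of_lb (by linarith) (key w hw) t ht
  have main := hasDerivAt_integral_of_dominated_loc_of_deriv_le
    (F := fun w => fun t : ℝ => (t:ℂ) ^ (z - 1) / ((t:ℂ) + w))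
    (F' := fun w => fun t : ℝ => -((t:ℂ) ^ (z - 1) / ((t:ℂ) + w) ^ 2))
    (x₀ := c) (μ := volume.restrict (Ioi 0))
    (bound := fun t : ℝ => if t ≤ M then ((ε/2) ^ 2)⁻¹ * t ^ (x - 1) else (4/ε) * t ^ (x - 2))
    (Metric.ball_mem_nhds c (half_pos hε)) ?_ ?_ ?_ ?_ ?_ ?_
  · exact main.2.differentiableAt
  · filter_upwards [Metric.ball_mem_nhds c (half_pos hε)] with w hw
    exact aesm_aux (z - 1) (hne w hw)
  · exact integrableOn_f hz0 hz1 hε hl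
  · exact aesm_sq (z - 1) (hne c (Metric.mem_ball_self (half_pos hε)))
  · rw [ae_restrict_iff' measurableSet_Ioi]
    refine ae_of_all _ fun t ht => ?_
    intro w hw
    have ht' : (0:ℝ) < t := ht
    have habs := key w hw t ht'.le
    show ‖-((t:ℂ) ^ (z - 1) / ((t:ℂ) + w) ^ 2)‖
        ≤ if t ≤ M then ((ε/2) ^ 2)⁻¹ * t ^ (x - 1) else (4/ε) * t ^ (x - 2)
    have hrw : ‖-((t:ℂ) ^ (z - 1) / ((t:ℂ) + w) ^ 2)‖
        = t ^ (x - 1) / ‖(t:ℂ) + w‖ ^ 2 := by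
      rw [norm_neg, norm_div,
        Complex.norm_cpow_eq_rpow_re_of_pos ht', norm_pow]
      simp [hx]
    rw [hrw]
    have htp : (0:ℝ) ≤ t ^ (x - 1) := Real.rpow_nonneg ht'.le _
    by_cases hcase : t ≤ M
    · rw [if_pos hcase]
      have h7 : (ε/2) ^ 2 ≤ ‖(t:ℂ) + w‖ ^ 2 :=
        pow_le_pow_left₀ (by linarith) habs 2
      calc t ^ (x-1) / ‖(t:ℂ) + w‖ ^ 2 ≤ t ^ (x-1) / (ε/2) ^ 2 :=
        div_le_div_of_nonneg_left htp (by positivity) h7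
      _ = ((ε/2) ^ 2)⁻¹ * t ^ (x-1) := by rw [div_eq_inv_mul]
    · rw [if_neg hcase]
      push_neg at hcase
      have habs2 : t/2 ≤ ‖(t:ℂ) + w‖ := by
        have h1 := abs_add_ge (c := w) t
        have h2 : ‖(t:ℂ)‖ = t := by rw [Complex.norm_of_nonneg ht'.le]
        have h3 : 2 * (‖c‖ + ε) ≤ M := le_max_right _ _
        have h4 : ‖w‖ ≤ ‖c‖ + ε/2 := by
          have h5 : ‖w - c‖ < ε/2 := by rwa [Metric.mem_ball, Complex.dist_eq] at hw
          have h6 := norm_add_le (w - c) c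
          simp only [sub_add_cancel] at h6
          linarith
        linarith
      have hsq : (ε/2) * (t/2) ≤ ‖(t:ℂ) + w‖ ^ 2 := by
        have := mul_le_mul habs habs2 (by linarith) (by positivity)
        calc (ε/2) * (t/2) ≤ ‖(t:ℂ)+w‖ * ‖(t:ℂ)+w‖ := this
        _ = ‖(t:ℂ)+w‖ ^ 2 := (sq _).symm
      have e : t ^ (x-2) = t ^ (x-1) / t := by
        rw [show x - 2 = (x-1) - 1 by ring, Real.rpow_sub ht', Real.rpow_one]
      calc t ^ (x-1) / ‖(t:ℂ) + w‖ ^ 2 ≤ t ^ (x-1) / ((ε/2) * (t/2)) :=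
        div_le_div_of_nonneg_left htp (by positivity) hsq
      _ = (4/ε) * t ^ (x-2) := by rw [e]; field_simp; ring
  · exact integrable_piecewise (x-1) (x-2) (((ε/2) ^ 2)⁻¹) (4/ε) M (by linarith) (by linarith) hM1
  · rw [ae_restrict_iff' measurableSet_Ioi]
    refine ae_of_all _ fun t ht => ?_
    intro w hw
    have ht' : (0:ℝ) < t := ht
    have hne' : (t:ℂ) + w ≠ 0 := hne w hw t ht'
    have h1 : HasDerivAt (fun w : ℂ => (t:ℂ) + w) 1 w := by
      simpa using (hasDerivAt_id w).const_add (t:ℂ)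
    have h2 := (h1.inv hne').const_mul ((t:ℂ) ^ (z - 1))
    simp only [div_eq_mul_inv]
    convert h2 using 1
    · rfl
    · rfl
    · field_simp

lemma base_integral {z : ℂ} (hz0 : 0 < z.re) (hz1 : z.re < 1) :
    ∫ t in Ioi (0:ℝ), (t:ℂ) ^ (z - 1) / ((t:ℂ) + 1) =
      (Real.pi : ℂ) / Complex.sin (Real.pi * z) := by
  have himg : (fun u : ℝ => u / (1 - u)) '' Ioo 0 1 = Ioi (0:ℝ) := by
    ext t
    constructor
    · rintro ⟨u, hu, rfl⟩
      exact div_pos hu.1 (by simp; linarith [hu.2])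
    · intro ht
      have ht' : (0:ℝ) < t := ht
      refine ⟨t / (1 + t), ⟨div_pos ht' (by linarith), ?_⟩, ?_⟩
      · rw [div_lt_one (by linarith)]; linarith
      · have h1 : (1:ℝ) + t ≠ 0 := by linarith
        field_simp
        ring
  have hder : ∀ u ∈ Ioo (0:ℝ) 1, HasDerivWithinAt (fun u : ℝ => u / (1 - u))
      (((1 - u) ^ 2)⁻¹) (Ioo 0 1) u := by
    intro u hu
    have h1u : (1:ℝ) - u ≠ 0 := by have := hu.2; intro h; linarith [sub_eq_zero.mp h]
    have h1 : HasDerivAt (fun u : ℝ => 1 - u) (-1) u := by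
      simpa using ((hasDerivAt_id u).const_sub 1)
    have h3 := (hasDerivAt_id u).mul (h1.inv h1u)
    have h4 : HasDerivAt (fun u : ℝ => u / (1 - u)) (((1 - u) ^ 2)⁻¹) u := by
      have heq : (fun u : ℝ => u / (1 - u)) = fun u : ℝ => u * (1 - u)⁻¹ := by
        funext v; rw [div_eq_mul_inv]
      rw [heq]
      convert h3 using 1
      · rfl
      · rfl
      · rfl
      · simp only [Pi.inv_apply, id]
        field_simp
        ring
    exact h4.hasDerivWithinAt
  have hinj : InjOn (fun u : ℝ => u / (1 - u)) (Ioo 0 1) := by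
    intro a ha b hb h
    have ha' : (1:ℝ) - a ≠ 0 := by have := ha.2; intro hh; linarith [sub_eq_zero.mp hh]
    have hb' : (1:ℝ) - b ≠ 0 := by have := hb.2; intro hh; linarith [sub_eq_zero.mp hh]
    simp only at h
    field_simp at h
    linear_combination h
  have hchg := integral_image_eq_integral_abs_deriv_smul measurableSet_Ioo hder hinj
    (fun t : ℝ => (t:ℂ) ^ (z - 1) / ((t:ℂ) + 1))
  rw [himg] at hchg
  rw [hchg]
  have hpt : ∀ u ∈ Ioo (0:ℝ) 1,
      |((1 - u) ^ 2)⁻¹| • ((((u / (1 - u) : ℝ)):ℂ) ^ (z - 1) / ((((u / (1 - u) : ℝ)):ℂ) + 1))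
        = (u:ℂ) ^ (z - 1) * ((1:ℂ) - (u:ℂ)) ^ (-z) := by
    intro u hu
    have hu0 : (0:ℝ) < u := hu.1
    have hu1 : (0:ℝ) < 1 - u := by linarith [hu.2]
    have hu1' : ((1:ℂ) - (u:ℂ)) ≠ 0 := by
      rw [show (1:ℂ) - (u:ℂ) = ((1 - u : ℝ) : ℂ) by push_cast; ring]
      exact_mod_cast hu1.ne'
    -- the power of the quotient
    have hpow : (((u / (1 - u) : ℝ)):ℂ) ^ (z - 1)
        = (u:ℂ) ^ (z - 1) * ((1:ℂ) - (u:ℂ)) ^ (1 - z) := by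
      rw [show (u / (1 - u) : ℝ) = u * (1 - u)⁻¹ from div_eq_mul_inv _ _,
        Complex.ofReal_mul,
        Complex.mul_cpow_ofReal_nonneg hu0.le (inv_nonneg.mpr hu1.le) (z - 1)]
      congr 1
      · rw [Complex.ofReal_inv]
        rw [Complex.inv_cpow _ _ (by
          rw [Complex.arg_ofReal_of_nonneg hu1.le]
          exact Real.pi_ne_zero.symm)]
        rw [← Complex.cpow_neg, neg_sub]
        push_cast
        ring_nf
    -- the denominator
    have hden : (((u / (1 - u) : ℝ)):ℂ) + 1 = (((1 - u : ℝ)):ℂ)⁻¹ := by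
      rw [show (((u / (1 - u) : ℝ)):ℂ) + 1 = (((u / (1 - u) + 1 : ℝ)):ℂ) by push_cast; ring,
        show (u / (1 - u) + 1 : ℝ) = (1 - u)⁻¹ by field_simp; ring, Complex.ofReal_inv]
    rw [hpow, hden]
    have habs : |((1 - u) ^ 2)⁻¹| = ((1 - u) ^ 2)⁻¹ := abs_of_pos (by positivity)
    rw [habs, Complex.real_smul]
    have hzm : ((1:ℂ) - (u:ℂ)) ^ (-z) = ((1:ℂ) - (u:ℂ)) ^ (1 - z) / ((1:ℂ) - (u:ℂ)) := by
      rw [show (-z) = (1 - z) - 1 by ring, Complex.cpow_sub _ _ hu1', Complex.cpow_one]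
    rw [hzm]
    push_cast
    field_simp
  rw [setIntegral_congr_fun measurableSet_Ioo hpt]
  -- identify with the Beta integral
  have hbeta : Complex.betaIntegral z (1 - z)
      = ∫ u in Ioo (0:ℝ) 1, (u:ℂ) ^ (z - 1) * ((1:ℂ) - (u:ℂ)) ^ (-z) := by
    rw [Complex.betaIntegral]
    rw [intervalIntegral.integral_of_le zero_le_one, ← integral_Ioc_eq_integral_Ioo]
    congr 1
    ext u
    congr 1
    ring_nf
  rw [← hbeta]
  have h1z : 0 < (1 - z).re := by simp [Complex.sub_re]; linarith
  have hGG := Complex.Gamma_mul_Gamma_eq_betaIntegral hz0 h1z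
  rw [show z + (1 - z) = 1 by ring, Complex.Gamma_one, one_mul] at hGG
  rw [← hGG, Complex.Gamma_mul_Gamma_one_sub]

lemma scaled_integral {z : ℂ} (hz0 : 0 < z.re) (hz1 : z.re < 1) {r : ℝ} (hr : 0 < r) :
    ∫ t in Ioi (0:ℝ), (t:ℂ) ^ (z - 1) / ((t:ℂ) + (r:ℂ)) =
      (Real.pi : ℂ) * (r:ℂ) ^ (z - 1) / Complex.sin (Real.pi * z) := by
  have hr' : (r:ℂ) ≠ 0 := by exact_mod_cast hr.ne'
  have hcomp := integral_comp_mul_left_Ioi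
    (fun t : ℝ => (t:ℂ) ^ (z - 1) / ((t:ℂ) + (r:ℂ))) 0 hr
  rw [mul_zero] at hcomp
  have hpt : ∀ x ∈ Ioi (0:ℝ),
      ((r * x : ℝ):ℂ) ^ (z - 1) / (((r * x : ℝ):ℂ) + (r:ℂ))
        = ((r:ℂ) ^ (z - 1) * (r:ℂ)⁻¹) * ((x:ℂ) ^ (z - 1) / ((x:ℂ) + 1)) := by
    intro x hx
    have hx' : (0:ℝ) < x := hx
    have hx1 : (x:ℂ) + 1 ≠ 0 := by
      rw [show (x:ℂ) + 1 = ((x + 1 : ℝ):ℂ) by push_cast; ring]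
      exact_mod_cast (by linarith : x + 1 ≠ 0)
    rw [Complex.ofReal_mul, Complex.mul_cpow_ofReal_nonneg hr.le hx'.le]
    have hden : (r:ℂ) * (x:ℂ) + (r:ℂ) = (r:ℂ) * ((x:ℂ) + 1) := by ring
    rw [hden]
    field_simp
  rw [setIntegral_congr_fun measurableSet_Ioi hpt, integral_const_mul,
    base_integral hz0 hz1] at hcomp
  have hI : (r:ℝ) • ((r:ℂ) ^ (z - 1) * ((r:ℂ))⁻¹ * ((Real.pi:ℂ) / Complex.sin (Real.pi * z)))
      = ∫ t in Ioi (0:ℝ), (t:ℂ) ^ (z - 1) / ((t:ℂ) + (r:ℂ)) := by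
    rw [hcomp, smul_smul, mul_inv_cancel₀ hr.ne', one_smul]
  rw [← hI, Complex.real_smul, show ((r:ℂ) ^ (z - 1) * ((r:ℂ))⁻¹
      * ((Real.pi:ℂ) / Complex.sin (Real.pi * z)))
    = (r:ℂ)⁻¹ * ((r:ℂ) ^ (z - 1) * ((Real.pi:ℂ) / Complex.sin (Real.pi * z))) by ring,
    ← mul_assoc, mul_inv_cancel₀ hr', one_mul]
  ring

/-- The Mellin symbol of the kernel `(1/π)(t+c)⁻¹`: for `c ∈ ℂ` not a nonpositive real number
and `0 < Re z < 1`, `∫₀^∞ t^{z−1}/(t+c) dt = π c^{z−1}/sin(π z)`, the integral converging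
absolutely. -/
theorem mellin_symbol_cauchy_kernel
    (c : ℂ) (hc : ∀ r : ℝ, r ≤ 0 → c ≠ (r : ℂ))
    (z : ℂ) (hz0 : 0 < z.re) (hz1 : z.re < 1) :
    IntegrableOn (fun t : ℝ => (t : ℂ) ^ (z - 1) / ((t : ℂ) + c)) (Set.Ioi 0) ∧
      ∫ t in Set.Ioi (0:ℝ), (t : ℂ) ^ (z - 1) / ((t : ℂ) + c) =
        (Real.pi : ℂ) * c ^ (z - 1) / Complex.sin (Real.pi * z) := by
  have hc' : c ∈ Complex.slitPlane := by
    rw [Complex.mem_slitPlane_iff]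
    by_contra h
    push_neg at h
    obtain ⟨h1, h2⟩ := h
    exact hc c.re h1 (by apply Complex.ext <;> simp [h2])
  obtain ⟨ε, hε, hl⟩ := lower_bound hc'
  refine ⟨integrableOn_f hz0 hz1 hε hl, ?_⟩
  set F : ℂ → ℂ := fun w => ∫ t in Ioi (0:ℝ), (t:ℂ) ^ (z - 1) / ((t:ℂ) + w) with hF
  set G : ℂ → ℂ := fun w => (Real.pi : ℂ) * w ^ (z - 1) / Complex.sin (Real.pi * z) with hG
  have hFd : DifferentiableOn ℂ F Complex.slitPlane := fun w hw =>
    (differentiableAt_F hz0 hz1 hw).differentiableWithinAt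
  have hFa : AnalyticOnNhd ℂ F Complex.slitPlane :=
    hFd.analyticOnNhd Complex.isOpen_slitPlane
  have hGa : AnalyticOnNhd ℂ G Complex.slitPlane := by
    apply DifferentiableOn.analyticOnNhd _ Complex.isOpen_slitPlane
    intro w hw
    exact (((Complex.hasStrictDerivAt_cpow_const hw).hasDerivAt.differentiableAt.const_mul
      ((Real.pi : ℂ))).div_const _).differentiableWithinAt
  have h1mem : (1:ℂ) ∈ Complex.slitPlane := by
    rw [Complex.mem_slitPlane_iff]; left; simp
  have hrEq : ∀ r : ℝ, 0 < r → F (r:ℂ) = G (r:ℂ) := by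
    intro r hr
    simp only [hF, hG]
    exact scaled_integral hz0 hz1 hr
  have hfreq : ∃ᶠ w in nhdsWithin (1:ℂ) {(1:ℂ)}ᶜ, F w = G w := by
    have hseq : Filter.Tendsto (fun n : ℕ => ((n:ℝ) + 1)⁻¹) Filter.atTop (nhds 0) :=
      tendsto_inv_atTop_zero.comp
        (Filter.tendsto_atTop_add_const_right _ 1 tendsto_natCast_atTop_atTop)
    have htt : Filter.Tendsto (fun n : ℕ => ((1 + ((n:ℝ) + 1)⁻¹ : ℝ) : ℂ)) Filter.atTop
        (nhdsWithin (1:ℂ) {(1:ℂ)}ᶜ) := by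
      rw [tendsto_nhdsWithin_iff]
      constructor
      · have hre : Filter.Tendsto (fun n : ℕ => (1 + ((n:ℝ) + 1)⁻¹ : ℝ)) Filter.atTop
            (nhds 1) := by
          simpa using tendsto_const_nhds.add hseq
        have := (Complex.continuous_ofReal.tendsto (1:ℝ)).comp hre
        simpa [Function.comp_def] using this
      · refine Filter.Eventually.of_forall fun n => ?_
        simp only [Set.mem_compl_iff, Set.mem_singleton_iff]
        intro h
        have h1 : (1 + ((n:ℝ) + 1)⁻¹ : ℝ) = 1 := by exact_mod_cast h
        have hpos : (0:ℝ) < ((n:ℝ) + 1)⁻¹ := by positivity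
        linarith
    exact htt.frequently (Filter.Frequently.of_forall fun n => hrEq _ (by positivity))
  exact hFa.eqOn_of_preconnected_of_frequently_eq hGa isPreconnected_slitPlane' h1mem hfreq hc'
end
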